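/- arXiv:2201.09340 — 2 statements merged into one kernel-verified Lean document; each statement's English description precedes it below -/
import Mathlib

section
/- There is an absolute constant c₀ > 0 such that for every d ∈ ℕ there exist a finite simple graph G and a coin model (c, r) of G with the following property: for every Koebe ordering ⪯ of G with respect to (c, r), there exists a vertex u of G with |SReach_d[u]| ≥ c₀·d². -/
open Metric

/-- A coin model of a simple graph `G`: centers `c` and positive radii `r` such that the
open disks are pairwise disjoint and closed disks of adjacent vertices intersect. -/
structure IsCoinModel {V : Type*} (G : SimpleGraph V)
    (c : V → EuclideanSpace ℝ (Fin 2)) (r : V → ℝ) : Prop where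
  r_pos : ∀ v, 0 < r v
  disj : ∀ u v, u ≠ v → Disjoint (ball (c u) (r u)) (ball (c v) (r v))
  touch : ∀ u v, G.Adj u v →
    (closedBall (c u) (r u) ∩ closedBall (c v) (r v)).Nonempty

/-- The set of vertices strongly `d`-reachable from `u` with respect to the order
relation `le`: vertices `w ⪯ u` joined to `u` by a path of length at most `d` all of
whose internal vertices are strictly `≻ u`. -/
def SReach {V : Type*} (G : SimpleGraph V) (le : V → V → Prop) (d : ℕ) (u : V) :
    Set V :=
  {w | le w u ∧ ∃ p : G.Walk u w, p.IsPath ∧ p.length ≤ d ∧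
    ∀ x ∈ p.support, x ≠ u → x ≠ w → (le u x ∧ x ≠ u)}



noncomputable def pt (a b : ℝ) : EuclideanSpace ℝ (Fin 2) := (WithLp.equiv 2 _).symm ![a, b]

lemma dist_pt (a b a' b' : ℝ) :
    dist (pt a b) (pt a' b') = Real.sqrt ((a - a') ^ 2 + (b - b') ^ 2) := by
  rw [EuclideanSpace.dist_eq]
  congr 1
  rw [Fin.sum_univ_two]
  simp [pt, WithLp.equiv_symm_apply, Real.dist_eq, sq_abs]

lemma abs_fst_le_dist (a b a' b' : ℝ) : |a - a'| ≤ dist (pt a b) (pt a' b') := by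
  rw [dist_pt, ← Real.sqrt_sq_eq_abs]
  exact Real.sqrt_le_sqrt (by nlinarith [sq_nonneg (b - b')])

lemma abs_snd_le_dist (a b a' b' : ℝ) : |b - b'| ≤ dist (pt a b) (pt a' b') := by
  rw [dist_pt, ← Real.sqrt_sq_eq_abs]
  exact Real.sqrt_le_sqrt (by nlinarith [sq_nonneg (a - a')])

lemma sqrt_eq_of_sq {x c : ℝ} (hc : 0 ≤ c) (h : x = c ^ 2) : Real.sqrt x = c := by
  rw [h, Real.sqrt_sq hc]

lemma closedBall_touch {E : Type*} [NormedAddCommGroup E] [NormedSpace ℝ E] {x y : E}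
    {r s : ℝ} (hr : 0 ≤ r) (hs : 0 ≤ s) (h : dist x y ≤ r + s) :
    (closedBall x r ∩ closedBall y s).Nonempty := by
  rcases (add_nonneg hr hs).eq_or_lt with h0 | h0
  · have hr0 : r = 0 := le_antisymm (by linarith) hr
    have hs0 : s = 0 := le_antisymm (by linarith) hs
    have hxy : x = y := dist_le_zero.mp (by linarith)
    exact ⟨x, by simp [hxy, hr0, hs0]⟩
  · refine ⟨x + (r / (r + s)) • (y - x), ?_, ?_⟩
    · simp only [mem_closedBall, dist_eq_norm, add_sub_cancel_left, norm_smul,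
        Real.norm_eq_abs]
      rw [abs_of_nonneg (by positivity)]
      calc r / (r + s) * ‖y - x‖ ≤ r / (r + s) * (r + s) := by
            apply mul_le_mul_of_nonneg_left _ (by positivity)
            rw [← dist_eq_norm, dist_comm]; exact h
        _ = r := by field_simp
    · simp only [mem_closedBall, dist_eq_norm]
      have hz : x + (r / (r + s)) • (y - x) - y = (1 - r / (r + s)) • (x - y) := by
        rw [sub_smul, one_smul, smul_sub, smul_sub]; abel
      rw [hz, norm_smul, Real.norm_eq_abs]
      have h1 : 1 - r / (r + s) = s / (r + s) := by field_simp; ring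
      rw [h1, abs_of_nonneg (by positivity)]
      calc s / (r + s) * ‖x - y‖ ≤ s / (r + s) * (r + s) := by
            apply mul_le_mul_of_nonneg_left _ (by positivity)
            rw [← dist_eq_norm]; exact h
        _ = s := by field_simp

lemma one_le_abs_nat {a b : ℕ} (h : a ≠ b) : (1 : ℝ) ≤ |(a : ℝ) - b| := by
  rcases h.lt_or_gt with h | h
  · refine le_abs.mpr (Or.inr ?_)
    have : (a : ℝ) + 1 ≤ b := by exact_mod_cast h
    linarith
  · refine le_abs.mpr (Or.inl ?_)
    have : (b : ℝ) + 1 ≤ a := by exact_mod_cast h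
    linarith
abbrev CV (m : ℕ) : Type := Unit ⊕ Fin (3*m) ⊕ (Fin m × Fin (2*m)) ⊕ (Fin m × Fin m)

def vu (m : ℕ) : CV m := Sum.inl ()
def vs (m : ℕ) (a : Fin (3*m)) : CV m := Sum.inr (Sum.inl a)
def vt (m : ℕ) (t : Fin m) (b : Fin (2*m)) : CV m := Sum.inr (Sum.inr (Sum.inl (t, b)))
def vg (m : ℕ) (t s : Fin m) : CV m := Sum.inr (Sum.inr (Sum.inr (t, s)))

noncomputable def ctr (m : ℕ) : CV m → EuclideanSpace ℝ (Fin 2)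
  | Sum.inl _ => pt (-(1/8)) 0
  | Sum.inr (Sum.inl a) => pt (3*(a.val+1)) 0
  | Sum.inr (Sum.inr (Sum.inl (t, b))) => pt (9*(t.val+1)) (3*(b.val+1))
  | Sum.inr (Sum.inr (Sum.inr (t, s))) => pt (9*(t.val+1) + 13/4) (6*(s.val+1))

noncomputable def rad (m : ℕ) : CV m → ℝ
  | Sum.inl _ => 13/8
  | Sum.inr (Sum.inl _) => 3/2
  | Sum.inr (Sum.inr (Sum.inl _)) => 3/2
  | Sum.inr (Sum.inr (Sum.inr _)) => 7/4

def CRel (m : ℕ) : CV m → CV m → Prop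
  | Sum.inl _, Sum.inr (Sum.inl a) => a.val = 0
  | Sum.inr (Sum.inl a), Sum.inr (Sum.inl a') => a'.val = a.val + 1
  | Sum.inr (Sum.inl a), Sum.inr (Sum.inr (Sum.inl (t, b))) =>
      a.val + 1 = 3*(t.val+1) ∧ b.val = 0
  | Sum.inr (Sum.inr (Sum.inl (t, b))), Sum.inr (Sum.inr (Sum.inl (t', b'))) =>
      t = t' ∧ b'.val = b.val + 1
  | Sum.inr (Sum.inr (Sum.inl (t, b))), Sum.inr (Sum.inr (Sum.inr (t', s))) =>
      t = t' ∧ b.val + 1 = 2*(s.val+1)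
  | _, _ => False

def Gr (m : ℕ) : SimpleGraph (CV m) := SimpleGraph.fromRel (CRel m)

example (m : ℕ) : Fintype (CV m) := inferInstance
example (m : ℕ) : DecidableEq (CV m) := inferInstance

lemma cast_succ_le {a b : ℕ} (h : a < b) : (a : ℝ) + 1 ≤ (b : ℝ) := by
  exact_mod_cast h

lemma key (m : ℕ) : ∀ u v : CV m, u ≠ v → rad m u + rad m v ≤ dist (ctr m u) (ctr m v) := by
  have habs : ∀ (c : ℝ) (x y : ℝ), 0 < c → (1:ℝ) ≤ |x - y| → c ≤ |c * (x + 1) - c * (y + 1)| := by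
    intro c x y hc h
    rw [show c * (x + 1) - c * (y + 1) = c * (x - y) by ring, abs_mul, abs_of_pos hc]
    nlinarith
  rintro (_ | a | ⟨t, b⟩ | ⟨t, s⟩) (_ | a' | ⟨t', b'⟩ | ⟨t', s'⟩) huv
  -- inl inl
  · exact absurd rfl huv
  -- inl sp
  · simp only [ctr, rad]
    refine le_trans (le_abs.mpr (Or.inr ?_)) (abs_fst_le_dist _ _ _ _)
    have h0 : (0:ℝ) ≤ (a'.val : ℝ) := Nat.cast_nonneg _
    linarith
  -- inl th
  · simp only [ctr, rad]
    refine le_trans (le_abs.mpr (Or.inr ?_)) (abs_fst_le_dist _ _ _ _)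
    have h0 : (0:ℝ) ≤ (t'.val : ℝ) := Nat.cast_nonneg _
    linarith
  -- inl tg
  · simp only [ctr, rad]
    refine le_trans (le_abs.mpr (Or.inr ?_)) (abs_fst_le_dist _ _ _ _)
    have h0 : (0:ℝ) ≤ (t'.val : ℝ) := Nat.cast_nonneg _
    linarith
  -- sp inl
  · simp only [ctr, rad]
    refine le_trans (le_abs.mpr (Or.inl ?_)) (abs_fst_le_dist _ _ _ _)
    have h0 : (0:ℝ) ≤ (a.val : ℝ) := Nat.cast_nonneg _
    linarith
  -- sp sp
  · simp only [ctr, rad]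
    have hv : a.val ≠ a'.val := by
      simpa [Fin.ext_iff] using huv
    refine le_trans ?_ (abs_fst_le_dist _ _ _ _)
    have := habs 3 a.val a'.val (by norm_num) (one_le_abs_nat hv)
    linarith
  -- sp th
  · simp only [ctr, rad]
    refine le_trans (le_abs.mpr (Or.inr ?_)) (abs_snd_le_dist _ _ _ _)
    have h0 : (0:ℝ) ≤ (b'.val : ℝ) := Nat.cast_nonneg _
    linarith
  -- sp tg
  · simp only [ctr, rad]
    refine le_trans (le_abs.mpr (Or.inr ?_)) (abs_snd_le_dist _ _ _ _)
    have h0 : (0:ℝ) ≤ (s'.val : ℝ) := Nat.cast_nonneg _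
    linarith
  -- th inl
  · simp only [ctr, rad]
    refine le_trans (le_abs.mpr (Or.inl ?_)) (abs_fst_le_dist _ _ _ _)
    have h0 : (0:ℝ) ≤ (t.val : ℝ) := Nat.cast_nonneg _
    linarith
  -- th sp
  · simp only [ctr, rad]
    refine le_trans (le_abs.mpr (Or.inl ?_)) (abs_snd_le_dist _ _ _ _)
    have h0 : (0:ℝ) ≤ (b.val : ℝ) := Nat.cast_nonneg _
    linarith
  -- th th
  · simp only [ctr, rad]
    have hne : ¬(t = t' ∧ b = b') := by
      simpa [Prod.ext_iff] using huv
    by_cases ht : t = t'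
    · subst ht
      have hb : b.val ≠ b'.val := by
        have : b ≠ b' := fun h => hne ⟨rfl, h⟩
        simpa [Fin.ext_iff] using this
      refine le_trans ?_ (abs_snd_le_dist _ _ _ _)
      have := habs 3 b.val b'.val (by norm_num) (one_le_abs_nat hb)
      linarith
    · have htv : t.val ≠ t'.val := by simpa [Fin.ext_iff] using ht
      refine le_trans ?_ (abs_fst_le_dist _ _ _ _)
      have := habs 9 t.val t'.val (by norm_num) (one_le_abs_nat htv)
      linarith
  -- th tg
  · simp only [ctr, rad]
    refine le_trans ?_ (abs_fst_le_dist _ _ _ _)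
    by_cases ht : t = t'
    · subst ht
      refine le_abs.mpr (Or.inr ?_)
      linarith
    · have htv : t.val ≠ t'.val := by simpa [Fin.ext_iff] using ht
      rcases htv.lt_or_gt with h | h
      · refine le_abs.mpr (Or.inr ?_)
        have := cast_succ_le h
        linarith
      · refine le_abs.mpr (Or.inl ?_)
        have := cast_succ_le h
        linarith
  -- tg inl
  · simp only [ctr, rad]
    refine le_trans (le_abs.mpr (Or.inl ?_)) (abs_fst_le_dist _ _ _ _)
    have h0 : (0:ℝ) ≤ (t.val : ℝ) := Nat.cast_nonneg _
    linarith
  -- tg sp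
  · simp only [ctr, rad]
    refine le_trans (le_abs.mpr (Or.inl ?_)) (abs_snd_le_dist _ _ _ _)
    have h0 : (0:ℝ) ≤ (s.val : ℝ) := Nat.cast_nonneg _
    linarith
  -- tg th
  · simp only [ctr, rad]
    refine le_trans ?_ (abs_fst_le_dist _ _ _ _)
    by_cases ht : t = t'
    · subst ht
      refine le_abs.mpr (Or.inl ?_)
      linarith
    · have htv : t.val ≠ t'.val := by simpa [Fin.ext_iff] using ht
      rcases htv.lt_or_gt with h | h
      · refine le_abs.mpr (Or.inr ?_)
        have := cast_succ_le h
        linarith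
      · refine le_abs.mpr (Or.inl ?_)
        have := cast_succ_le h
        linarith
  -- tg tg
  · simp only [ctr, rad]
    have hne : ¬(t = t' ∧ s = s') := by
      simpa [Prod.ext_iff] using huv
    by_cases ht : t = t'
    · subst ht
      have hs : s.val ≠ s'.val := by
        have : s ≠ s' := fun h => hne ⟨rfl, h⟩
        simpa [Fin.ext_iff] using this
      refine le_trans ?_ (abs_snd_le_dist _ _ _ _)
      have := habs 6 s.val s'.val (by norm_num) (one_le_abs_nat hs)
      linarith
    · have htv : t.val ≠ t'.val := by simpa [Fin.ext_iff] using ht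
      refine le_trans ?_ (abs_fst_le_dist _ _ _ _)
      rw [show (9*((t.val:ℝ)+1) + 13/4 - (9*((t'.val:ℝ)+1) + 13/4)) = 9*((t.val:ℝ)+1) - 9*((t'.val:ℝ)+1) by ring]
      have := habs 9 t.val t'.val (by norm_num) (one_le_abs_nat htv)
      linarith

lemma tkey (m : ℕ) : ∀ u v : CV m, CRel m u v →
    dist (ctr m u) (ctr m v) = rad m u + rad m v := by
  rintro (_ | a | ⟨t, b⟩ | ⟨t, s⟩) (_ | a' | ⟨t', b'⟩ | ⟨t', s'⟩) h <;>
    simp only [CRel] at h <;> try exact h.elim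
  -- u - spine
  · simp only [ctr, rad]
    rw [dist_pt, h]
    apply sqrt_eq_of_sq (by norm_num)
    push_cast
    ring
  -- spine - spine
  · simp only [ctr, rad]
    rw [dist_pt, h]
    apply sqrt_eq_of_sq (by norm_num)
    push_cast
    ring
  -- spine - tooth
  · obtain ⟨h1, h2⟩ := h
    have h1' : (a.val : ℝ) = 3*(t'.val : ℝ) + 2 := by
      have : a.val = 3*t'.val + 2 := by omega
      exact_mod_cast this
    simp only [ctr, rad]
    rw [dist_pt, h2, h1']
    apply sqrt_eq_of_sq (by norm_num)
    push_cast
    ring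
  -- tooth - tooth
  · obtain ⟨rfl, h2⟩ := h
    simp only [ctr, rad]
    rw [dist_pt, h2]
    apply sqrt_eq_of_sq (by norm_num)
    push_cast
    ring
  -- tooth - target
  · obtain ⟨rfl, h2⟩ := h
    have hb : (b.val : ℝ) = 2*(s'.val : ℝ) + 1 := by
      have : b.val = 2*s'.val + 1 := by omega
      exact_mod_cast this
    simp only [ctr, rad]
    rw [dist_pt, hb]
    apply sqrt_eq_of_sq (by norm_num)
    push_cast
    ring

lemma rad_pos (m : ℕ) (v : CV m) : 0 < rad m v := by
  rcases v with _ | a | ⟨t, b⟩ | ⟨t, s⟩ <;> norm_num [rad]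

def walkOfFn {W : Type} (G : SimpleGraph W) (f : ℕ → W) :
    (n : ℕ) → (∀ i, i < n → G.Adj (f i) (f (i+1))) → G.Walk (f 0) (f n)
  | 0, _ => SimpleGraph.Walk.nil
  | n+1, h =>
      (walkOfFn G f n fun i hi => h i (Nat.lt_succ_of_lt hi)).concat (h n n.lt_succ_self)

lemma walkOfFn_length {W : Type} (G : SimpleGraph W) (f : ℕ → W) :
    ∀ (n : ℕ) (h : ∀ i, i < n → G.Adj (f i) (f (i+1))), (walkOfFn G f n h).length = n
  | 0, _ => rfl
  | n+1, h => by
      simp [walkOfFn, SimpleGraph.Walk.length_concat, walkOfFn_length G f n _]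

lemma walkOfFn_support {W : Type} (G : SimpleGraph W) (f : ℕ → W) :
    ∀ (n : ℕ) (h : ∀ i, i < n → G.Adj (f i) (f (i+1))),
      (walkOfFn G f n h).support = (List.range (n+1)).map f
  | 0, _ => by simp [walkOfFn, List.range_succ]
  | n+1, h => by
      rw [walkOfFn, SimpleGraph.Walk.support_concat, walkOfFn_support G f n _]
      simp [List.range_succ]

def pf (m : ℕ) (t s : Fin m) (i : ℕ) : CV m :=
  if i = 0 then vu m
  else if h1 : i ≤ 3*(t.val+1) then vs m ⟨i-1, by have := t.isLt; omega⟩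
  else if h2 : i ≤ 3*(t.val+1) + 2*(s.val+1) then
    vt m t ⟨i - 3*(t.val+1) - 1, by have := s.isLt; omega⟩
  else vg m t s

def pg (m : ℕ) (t s : Fin m) : CV m → ℕ
  | Sum.inl _ => 0
  | Sum.inr (Sum.inl a) => a.val + 1
  | Sum.inr (Sum.inr (Sum.inl (_, b))) => 3*(t.val+1) + b.val + 1
  | Sum.inr (Sum.inr (Sum.inr _)) => 3*(t.val+1) + 2*(s.val+1) + 1

lemma pg_pf (m : ℕ) (t s : Fin m) (i : ℕ)
    (hi : i ≤ 3*(t.val+1) + 2*(s.val+1) + 1) : pg m t s (pf m t s i) = i := by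
  unfold pf
  split_ifs with h0 h1 h2 <;> simp [pg, vu, vs, vt, vg] <;> omega

lemma pf_zero (m : ℕ) (t s : Fin m) : pf m t s 0 = vu m := by simp [pf]

lemma pf_spine (m : ℕ) (t s : Fin m) {i : ℕ} (h1 : 1 ≤ i) (h2 : i ≤ 3*(t.val+1)) :
    pf m t s i = vs m ⟨i-1, by have := t.isLt; omega⟩ := by
  unfold pf
  rw [if_neg (by omega), dif_pos h2]

lemma pf_tooth (m : ℕ) (t s : Fin m) {i : ℕ} (h1 : 3*(t.val+1) < i)
    (h2 : i ≤ 3*(t.val+1) + 2*(s.val+1)) :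
    pf m t s i = vt m t ⟨i - 3*(t.val+1) - 1, by have := s.isLt; omega⟩ := by
  unfold pf
  rw [if_neg (by omega), dif_neg (by omega), dif_pos h2]

lemma pf_top (m : ℕ) (t s : Fin m) :
    pf m t s (3*(t.val+1) + 2*(s.val+1) + 1) = vg m t s := by
  unfold pf
  rw [if_neg (by omega), dif_neg (by omega), dif_neg (by omega)]

lemma pf_adj (m : ℕ) (t s : Fin m) (i : ℕ) (hi : i < 3*(t.val+1) + 2*(s.val+1) + 1) :
    (Gr m).Adj (pf m t s i) (pf m t s (i+1)) := by
  have htlt := t.isLt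
  have hslt := s.isLt
  rw [Gr, SimpleGraph.fromRel_adj]
  rcases Nat.eq_zero_or_pos i with h0 | h0
  · rw [h0, pf_zero, pf_spine m t s (by omega) (by omega)]
    refine ⟨by simp [vu, vs], Or.inl ?_⟩
    simp [CRel, vu, vs]
  by_cases hA : i < 3*(t.val+1)
  · rw [pf_spine m t s (by omega) (by omega), pf_spine m t s (by omega) (by omega)]
    refine ⟨?_, Or.inl ?_⟩
    · simp only [vs, ne_eq, Sum.inr.injEq, Sum.inl.injEq, Fin.mk.injEq]
      omega
    · simp only [CRel, vs]
      omega
  by_cases hB : i = 3*(t.val+1)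
  · rw [pf_spine m t s (by omega) (by omega), pf_tooth m t s (by omega) (by omega)]
    refine ⟨by simp [vs, vt], Or.inl ?_⟩
    simp only [CRel, vs, vt]
    omega
  by_cases hC : i < 3*(t.val+1) + 2*(s.val+1)
  · rw [pf_tooth m t s (by omega) (by omega), pf_tooth m t s (by omega) (by omega)]
    refine ⟨?_, Or.inl ?_⟩
    · simp only [vt, ne_eq, Sum.inr.injEq, Sum.inl.injEq, Prod.mk.injEq, Fin.mk.injEq]
      omega
    · simp only [CRel, vt]
      exact ⟨trivial, by omega⟩
  · rw [pf_tooth m t s (by omega) (by omega),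
      show i + 1 = 3*(t.val+1) + 2*(s.val+1) + 1 by omega, pf_top]
    refine ⟨by simp [vt, vg], Or.inl ?_⟩
    simp only [CRel, vt, vg]
    exact ⟨trivial, by omega⟩

lemma coin (m : ℕ) : IsCoinModel (Gr m) (ctr m) (rad m) where
  r_pos := rad_pos m
  disj := fun u v h => Metric.ball_disjoint_ball (key m u v h)
  touch := by
    intro u v huv
    rw [Gr, SimpleGraph.fromRel_adj] at huv
    obtain ⟨hne, h | h⟩ := huv
    · exact closedBall_touch (rad_pos m u).le (rad_pos m v).le (le_of_eq (tkey m u v h))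
    · exact closedBall_touch (rad_pos m u).le (rad_pos m v).le
        (le_of_eq (by rw [dist_comm, tkey m v u h, add_comm]))

lemma target_mem (m : ℕ) (t s : Fin m) (d : ℕ) (hd : 3*(t.val+1) + 2*(s.val+1) + 1 ≤ d)
    (le : CV m → CV m → Prop) (hko : ∀ a b, rad m b < rad m a → le a b) :
    vg m t s ∈ SReach (Gr m) le d (vu m) := by
  have hadj : ∀ i, i < 3*(t.val+1) + 2*(s.val+1) + 1 →
      (Gr m).Adj (pf m t s i) (pf m t s (i+1)) := fun i hi => pf_adj m t s i hi
  refine ⟨hko _ _ (by norm_num [rad, vg, vu]),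
    (walkOfFn (Gr m) (pf m t s) _ hadj).copy (pf_zero m t s) (pf_top m t s), ?_, ?_, ?_⟩
  · rw [SimpleGraph.Walk.isPath_def, SimpleGraph.Walk.support_copy, walkOfFn_support]
    refine List.Nodup.map_on ?_ List.nodup_range
    intro x hx y hy hxy
    rw [List.mem_range] at hx hy
    have := congrArg (pg m t s) hxy
    rwa [pg_pf m t s x (by omega), pg_pf m t s y (by omega)] at this
  · rw [SimpleGraph.Walk.length_copy, walkOfFn_length]
    exact hd
  · intro x hx hxu hxw
    rw [SimpleGraph.Walk.support_copy, walkOfFn_support] at hx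
    obtain ⟨i, hi, rfl⟩ := List.mem_map.mp hx
    have hshape : pf m t s i = vu m ∨ pf m t s i = vg m t s ∨ rad m (pf m t s i) = 3/2 := by
      unfold pf
      split_ifs <;> simp [rad, vu, vs, vt, vg]
    rcases hshape with h | h | h
    · exact absurd h hxu
    · exact absurd h hxw
    · exact ⟨hko _ _ (by rw [h]; norm_num [rad, vu]), hxu⟩

lemma u_mem (m d : ℕ) (le : CV m → CV m → Prop) (hrefl : le (vu m) (vu m)) :
    vu m ∈ SReach (Gr m) le d (vu m) :=
  ⟨hrefl, SimpleGraph.Walk.nil, SimpleGraph.Walk.IsPath.nil, by simp,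
    fun x hx hxu _ => absurd (by simpa using hx) hxu⟩

/-- There is a planar graph with a coin model all of whose Koebe orderings have strong
`d`-coloring number at least `c₀·d²`. -/
theorem koebe_sreach_lower_bound :
    ∃ c₀ : ℝ, 0 < c₀ ∧
      ∀ d : ℕ,
        ∃ (V : Type) (_ : Fintype V) (G : SimpleGraph V)
          (c : V → EuclideanSpace ℝ (Fin 2)) (r : V → ℝ),
          IsCoinModel G c r ∧
          ∀ le : V → V → Prop, IsLinearOrder V le →
            (∀ a b : V, r b < r a → le a b) →
            ∃ u : V, c₀ * (d : ℝ) ^ 2 ≤ ((SReach G le d u).ncard : ℝ) := by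
  refine ⟨1/400, by norm_num, fun d => ?_⟩
  set m := (d + 19) / 20 with hm
  refine ⟨CV m, inferInstance, Gr m, ctr m, rad m, coin m, ?_⟩
  intro le hlin hko
  refine ⟨vu m, ?_⟩
  by_cases hd : d ≤ 20
  · have h1 : vu m ∈ SReach (Gr m) le d (vu m) :=
      u_mem m d le (by haveI := hlin; exact refl_of le (vu m))
    have h2 : 1 ≤ (SReach (Gr m) le d (vu m)).ncard :=
      (Set.ncard_pos (Set.toFinite _)).mpr ⟨_, h1⟩
    have h3 : (1:ℝ) ≤ ((SReach (Gr m) le d (vu m)).ncard : ℝ) := by exact_mod_cast h2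
    have hd' : (d:ℝ) ≤ 20 := by exact_mod_cast hd
    nlinarith [Nat.cast_nonneg (α := ℝ) d]
  · push_neg at hd
    have hm1 : 5*m + 1 ≤ d := by omega
    have hdm : d ≤ 20 * m := by omega
    have hsub : (Set.range fun p : Fin m × Fin m => vg m p.1 p.2) ⊆
        SReach (Gr m) le d (vu m) := by
      rintro x ⟨⟨t, s⟩, rfl⟩
      exact target_mem m t s d (by have := t.isLt; have := s.isLt; omega) le hko
    have hinj : Function.Injective (fun p : Fin m × Fin m => vg m p.1 p.2) := by
      intro p q h
      simp only [vg, Sum.inr.injEq, Prod.mk.injEq] at h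
      exact Prod.ext h.1 h.2
    have hcard : (Set.range fun p : Fin m × Fin m => vg m p.1 p.2).ncard = m * m := by
      rw [← Set.image_univ, Set.ncard_image_of_injective _ hinj, Set.ncard_univ]
      simp [Nat.card_eq_fintype_card]
    have hle := Set.ncard_le_ncard hsub (Set.toFinite _)
    rw [hcard] at hle
    have h4 : ((m*m : ℕ) : ℝ) ≤ ((SReach (Gr m) le d (vu m)).ncard : ℝ) := by
      exact_mod_cast hle
    have hd2 : (d:ℝ) ≤ 20*m := by exact_mod_cast hdm
    push_cast at h4
    nlinarith [Nat.cast_nonneg (α := ℝ) d, Nat.cast_nonneg (α := ℝ) m]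
end

section
/- There is an absolute constant c₀ > 0 such that for every d ∈ ℕ there exist a finite simple graph G and a coin model (c, r) of G with the following property: for every Koebe ordering ⪯ of G with respect to (c, r), there exists a vertex u of G with |WReach_d[u]| ≥ c₀·d³. -/
open Metric

/-- The set of vertices weakly `d`-reachable from `u` with respect to the order
relation `le`: vertices `w ⪯ u` joined to `u` by a path of length at most `d` all of
whose vertices are `⪰ w`. -/
def WReach {V : Type*} (G : SimpleGraph V) (le : V → V → Prop) (d : ℕ) (u : V) :
    Set V :=
  {w | le w u ∧ ∃ p : G.Walk u w, p.IsPath ∧ p.length ≤ d ∧ ∀ x ∈ p.support, le w x}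

namespace KoebeLB
open Metric

noncomputable def pt (a b : ℝ) : EuclideanSpace ℝ (Fin 2) := !₂[a, b]

lemma dist_pt (a b c d : ℝ) : dist (pt a b) (pt c d) = Real.sqrt ((a-c)^2 + (b-d)^2) := by
  rw [EuclideanSpace.dist_eq, Fin.sum_univ_two]
  simp [pt, Real.dist_eq, sq_abs]

lemma dist_pt_ge {a b c d z : ℝ} (hz : 0 ≤ z) (h : z^2 ≤ (a-c)^2 + (b-d)^2) :
    z ≤ dist (pt a b) (pt c d) := by
  rw [dist_pt]; exact (Real.le_sqrt hz (by positivity)).mpr h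

lemma touch_horiz {x1 x2 y r1 r2 : ℝ} (h1 : 0 ≤ r1) (h2 : 0 ≤ r2) (h : x2 - x1 = r1 + r2) :
    (closedBall (pt x1 y) r1 ∩ closedBall (pt x2 y) r2).Nonempty := by
  refine ⟨pt (x1 + r1) y, ?_, ?_⟩ <;> rw [mem_closedBall, dist_pt]
  · rw [show (x1 + r1 - x1)^2 + (y - y)^2 = r1^2 by ring, Real.sqrt_sq h1]
  · rw [show (x1 + r1 - x2)^2 + (y - y)^2 = r2^2 by
      rw [show x1 + r1 - x2 = -r2 by linarith]; ring, Real.sqrt_sq h2]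

lemma touch_vert {x y1 y2 r1 r2 : ℝ} (h1 : 0 ≤ r1) (h2 : 0 ≤ r2) (h : y2 - y1 = r1 + r2) :
    (closedBall (pt x y1) r1 ∩ closedBall (pt x y2) r2).Nonempty := by
  refine ⟨pt x (y1 + r1), ?_, ?_⟩ <;> rw [mem_closedBall, dist_pt]
  · rw [show (x - x)^2 + (y1 + r1 - y1)^2 = r1^2 by ring, Real.sqrt_sq h1]
  · rw [show (x - x)^2 + (y1 + r1 - y2)^2 = r2^2 by
      rw [show y1 + r1 - y2 = -r2 by linarith]; ring, Real.sqrt_sq h2]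

/-- Vertex type: trunk ⊕ spines ⊕ teeth. -/
abbrev VV (s : ℕ) := Fin (2*s+1) ⊕ (Fin (s+1) × Fin (4*s)) ⊕ (Fin (s+1) × Fin s × Fin (4*s))

/-- row index of tooth `t`. -/
def rowk (s : ℕ) (t : Fin s) : ℕ := 2*s + 2*((t:ℕ)+1)

noncomputable def rad (s : ℕ) : VV s → ℝ
  | .inl i => 100*(s:ℝ) * 3^(i:ℕ)
  | .inr (.inl (m, k)) => 9^(m:ℕ) * (100*(s:ℝ) + (((k:ℕ):ℝ)+1))
  | .inr (.inr (m, t, a)) =>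
      9^(m:ℕ) * (100*(s:ℝ) + ((rowk s t : ℕ):ℝ) + (((a:ℕ):ℝ)+1))

noncomputable def ctr (s : ℕ) : VV s → EuclideanSpace ℝ (Fin 2)
  | .inl i => pt (2*(100*(s:ℝ))*3^(i:ℕ)) 0
  | .inr (.inl (m, k)) =>
      pt (2*(100*(s:ℝ))*9^(m:ℕ))
        (9^(m:ℕ) * ((((k:ℕ):ℝ)+1) * (2*(100*(s:ℝ)) + (((k:ℕ):ℝ)+1))))
  | .inr (.inr (m, t, a)) =>
      pt (9^(m:ℕ) * (2*(100*(s:ℝ)) -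
            (((a:ℕ):ℝ)+1) * (2*(100*(s:ℝ) + ((rowk s t : ℕ):ℝ)) + (((a:ℕ):ℝ)+1))))
        (9^(m:ℕ) * (((rowk s t : ℕ):ℝ) * (2*(100*(s:ℝ)) + ((rowk s t : ℕ):ℝ))))

end KoebeLB
namespace KoebeLB
section
variable {q P P' u u' kk kk' aa aa' : ℝ}

-- generic: z ≤ B, plus extra nonneg A² term
lemma sqdom {z A B : ℝ} (hz : 0 ≤ z) (h : z ≤ B) : z^2 ≤ A^2 + B^2 := by
  nlinarith [sq_nonneg A]

lemma sqdom' {z A B : ℝ} (hz : 0 ≤ z) (h : z ≤ A) : z^2 ≤ A^2 + B^2 := by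
  nlinarith [sq_nonneg B]

-- T-T : radii n u, n u'; Δx = 2n(u'-u), u' ≥ 3u
lemma keyTT (hq : 1 ≤ q) (hu : 1 ≤ u) (h : 3*u ≤ u') :
    100*q*u + 100*q*u' ≤ 2*(100*q)*u' - 2*(100*q)*u := by nlinarith

-- T-S, case i ≤ 2m-1 : 3u ≤ P. z ≤ B where B = P kk (2n+kk)
lemma keyTS1 (hq : 1 ≤ q) (hP : 1 ≤ P) (hu : 1 ≤ u) (hkk : 1 ≤ kk) (h : 3*u ≤ P) :
    100*q*u + P*(100*q+kk) ≤ P*(kk*(2*(100*q)+kk)) := by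
  have h1 : 0 ≤ P*((kk-1)*(2*(100*q)+kk)) := by
    apply mul_nonneg (by linarith); apply mul_nonneg (by linarith) (by linarith)
  have h2 : 0 ≤ (100*q)*(P - u) := by apply mul_nonneg (by linarith) (by linarith)
  nlinarith

-- T-S, case i = 2m : u = P, Δx = 0, 1-D vertical
lemma keyTS2 (hq : 1 ≤ q) (hP : 1 ≤ P) (hkk : 1 ≤ kk) :
    100*q*P + P*(100*q+kk) ≤ P*(kk*(2*(100*q)+kk)) := by
  have h1 : 0 ≤ P*((kk-1)*(2*(100*q)+kk)) := by
    apply mul_nonneg (by linarith); apply mul_nonneg (by linarith) (by linarith)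
  nlinarith

-- T-S, case i = 2m+1 : u = 3P. z = P(4n+kk), A = 4nP, B ≥ 2nP
lemma keyTS3 (hq : 1 ≤ q) (hP : 1 ≤ P) (hkk : 1 ≤ kk) (hkk2 : kk ≤ 4*q) :
    (100*q*(3*P) + P*(100*q+kk))^2
      ≤ (2*(100*q)*(3*P) - 2*(100*q)*P)^2 + (P*(kk*(2*(100*q)+kk)))^2 := by
  have hB : 2*(100*q)*P ≤ P*(kk*(2*(100*q)+kk)) := by
    have h1 : 0 ≤ P*((kk-1)*(2*(100*q)+kk)) := by
      apply mul_nonneg (by linarith); apply mul_nonneg (by linarith) (by linarith)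
    nlinarith
  have hkn : kk ≤ (100*q)/25 := by linarith
  have h1 : (4*(100*q)+kk)^2 ≤ 20*(100*q)^2 := by nlinarith
  have h2 : 0 ≤ P := by linarith
  nlinarith [sq_nonneg P, mul_nonneg (mul_nonneg h2 h2) (sub_nonneg.2 h1),
    mul_le_mul_of_nonneg_left hB (mul_nonneg (by linarith : (0:ℝ) ≤ 2*(100*q)) (by linarith : (0:ℝ) ≤ P))]

-- T-S, case i ≥ 2m+2 : 9P ≤ u. z ≤ A = 2n(u-P)
lemma keyTS4 (hq : 1 ≤ q) (hP : 1 ≤ P) (hkk : 1 ≤ kk) (hkk2 : kk ≤ 4*q) (h : 9*P ≤ u) :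
    100*q*u + P*(100*q+kk) ≤ 2*(100*q)*u - 2*(100*q)*P := by
  have h1 : P*kk ≤ (u/9)*(4*q) := by
    apply mul_le_mul (by linarith) hkk2 (by linarith) (by linarith)
  have h2 : (100*q)*P ≤ (100*q)*(u/9) := by
    apply mul_le_mul_of_nonneg_left (by linarith) (by linarith)
  nlinarith
end
section
variable {q P P' u kk kk' aa aa' : ℝ}

-- T-W : z² ≤ Δx² + Δy²
lemma keyTW (hq : 1 ≤ q) (hP : 1 ≤ P) (hu : 1 ≤ u) (hk1 : 2*q+2 ≤ kk) (hk2 : kk ≤ 4*q)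
    (ha1 : 1 ≤ aa) (ha2 : aa ≤ 4*q) :
    (100*q*u + P*(100*q+kk+aa))^2
      ≤ (2*(100*q)*u - P*(2*(100*q) - aa*(2*(100*q+kk)+aa)))^2
        + (0 - P*(kk*(2*(100*q)+kk)))^2 := by
  have hq0 : (0:ℝ) < q := by linarith
  have hP0 : (0:ℝ) < P := by linarith
  have hkk0 : (0:ℝ) < kk := by linarith
  have hw : 2*(100*q) + 2*kk + aa ≤ aa*(2*(100*q+kk)+aa) := by
    nlinarith [mul_nonneg (by linarith : (0:ℝ) ≤ aa - 1) (by linarith : (0:ℝ) ≤ 2*(100*q+kk)+aa)]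
  have hA : 2*(100*q)*u ≤ 2*(100*q)*u - P*(2*(100*q) - aa*(2*(100*q+kk)+aa)) := by
    nlinarith [mul_nonneg (le_of_lt hP0) (by nlinarith : (0:ℝ) ≤ aa*(2*(100*q+kk)+aa) - 2*(100*q))]
  have hB : 4*(100*q)*q*P ≤ P*(kk*(2*(100*q)+kk)) := by
    have : (2*q)*(2*(100*q)) ≤ kk*(2*(100*q)+kk) := by nlinarith
    nlinarith
  have hz0 : (0:ℝ) ≤ 100*q*u + P*(100*q+kk+aa) := by nlinarith
  have hz : 100*q*u + P*(100*q+kk+aa) ≤ 100*q*u + P*(100*q) + P*(8*q) := by nlinarith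
  have hA0 : (0:ℝ) ≤ 2*(100*q)*u := by nlinarith
  have hB0 : (0:ℝ) ≤ 4*(100*q)*q*P := by nlinarith
  have h2 : (100*q*u + P*(100*q) + P*(8*q))^2 ≤ (2*(100*q)*u)^2 + (4*(100*q)*q*P)^2 := by
    nlinarith [mul_nonneg (sq_nonneg (10*q)) (sq_nonneg (u-P)),
      mul_nonneg (mul_nonneg (sq_nonneg (100*q)) (by nlinarith : (0:ℝ) ≤ q^2 - 1)) (sq_nonneg P),
      sq_nonneg (100*q*(u-P)), mul_pos hq0 hP0, mul_pos (mul_pos hq0 hq0) (mul_pos hP0 hP0)]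
  have e1 := pow_le_pow_left₀ hz0 hz 2
  have e2 := pow_le_pow_left₀ hA0 hA 2
  have e3 := pow_le_pow_left₀ hB0 hB 2
  rw [show (0 - P*(kk*(2*(100*q)+kk)))^2 = (P*(kk*(2*(100*q)+kk)))^2 from by ring]
  linarith

-- S-S same comb (1-D vertical), kk+1 ≤ kk'
lemma keySS1 (hq : 1 ≤ q) (hP : 1 ≤ P) (hkk : 1 ≤ kk) (h : kk + 1 ≤ kk') :
    P*(100*q+kk) + P*(100*q+kk') ≤ P*(kk'*(2*(100*q)+kk')) - P*(kk*(2*(100*q)+kk)) := by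
  have : P*(kk'*(2*(100*q)+kk')) - P*(kk*(2*(100*q)+kk))
      = P*((kk'-kk)*(2*(100*q)+kk+kk')) := by ring
  rw [this]
  nlinarith [mul_nonneg (by linarith : (0:ℝ) ≤ P)
    (mul_nonneg (by linarith : (0:ℝ) ≤ kk'-kk-1) (by linarith : (0:ℝ) ≤ 2*(100*q)+kk+kk'))]

-- S-S / different scales (Δx alone), 9P ≤ P'
lemma keySS2 (hq : 1 ≤ q) (hP : 1 ≤ P) (hkk : 1 ≤ kk) (hkk2 : kk ≤ 4*q)
    (hkk' : 1 ≤ kk') (hkk2' : kk' ≤ 8*q) (h : 9*P ≤ P') :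
    P*(100*q+kk) + P'*(100*q+kk') ≤ 2*(100*q)*P' - 2*(100*q)*P := by
  have h1 : P*kk ≤ (P'/9)*(4*q) := by
    apply mul_le_mul (by linarith) hkk2 (by linarith) (by nlinarith)
  have h2 : P'*kk' ≤ P'*(8*q) := by
    apply mul_le_mul_of_nonneg_left hkk2' (by nlinarith)
  have h3 : (100*q)*P ≤ (100*q)*(P'/9) := by
    apply mul_le_mul_of_nonneg_left (by linarith) (by linarith)
  nlinarith
end
section
variable {q P P' c c' kk kk' aa aa' A : ℝ}

-- S-W same comb, same row (1-D horizontal)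
lemma keySW1 (hq : 1 ≤ q) (hP : 1 ≤ P) (hkk : 1 ≤ kk) (ha : 1 ≤ aa) :
    P*(100*q+kk) + P*(100*q+kk+aa)
      ≤ 2*(100*q)*P - P*(2*(100*q) - aa*(2*(100*q+kk)+aa)) := by
  nlinarith [mul_nonneg (by linarith : (0:ℝ) ≤ P)
    (mul_nonneg (by linarith : (0:ℝ) ≤ aa-1) (by linarith : (0:ℝ) ≤ 2*(100*q+kk)+aa))]

-- S-W same comb, different rows
lemma keySW2 (hq : 1 ≤ q) (hP : 1 ≤ P) (hkk : 1 ≤ kk) (hkk2 : kk ≤ 4*q)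
    (hkk' : 1 ≤ kk') (hkk2' : kk' ≤ 4*q) (ha1 : 1 ≤ aa) (ha2 : aa ≤ 4*q)
    (hd : 1 ≤ (kk-kk')^2) :
    (P*(100*q+kk) + P*(100*q+kk'+aa))^2
      ≤ (2*(100*q)*P - P*(2*(100*q) - aa*(2*(100*q+kk')+aa)))^2
        + (P*(kk*(2*(100*q)+kk)) - P*(kk'*(2*(100*q)+kk')))^2 := by
  have hP0 : (0:ℝ) < P := by linarith
  have hA : P*(2*(100*q)) ≤ 2*(100*q)*P - P*(2*(100*q) - aa*(2*(100*q+kk')+aa)) := by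
    nlinarith [mul_nonneg (le_of_lt hP0)
      (by nlinarith [mul_nonneg (by linarith : (0:ℝ) ≤ aa-1) (by linarith : (0:ℝ) ≤ 2*(100*q+kk')+aa)] :
        (0:ℝ) ≤ aa*(2*(100*q+kk')+aa) - 2*(100*q))]
  have hy : (P*(2*(100*q)))^2 ≤ (P*(kk*(2*(100*q)+kk)) - P*(kk'*(2*(100*q)+kk')))^2 := by
    have e : (P*(kk*(2*(100*q)+kk)) - P*(kk'*(2*(100*q)+kk')))^2
        = P^2*((kk-kk')^2*(2*(100*q)+kk+kk')^2) := by ring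
    rw [e]
    have h1 : (2*(100*q))^2 ≤ (2*(100*q)+kk+kk')^2 := by nlinarith
    have h2 : (2*(100*q))^2 ≤ (kk-kk')^2*(2*(100*q)+kk+kk')^2 := by
      nlinarith [mul_le_mul hd h1 (by positivity) (by nlinarith)]
    calc (P*(2*(100*q)))^2 = P^2*(2*(100*q))^2 := by ring
    _ ≤ P^2*((kk-kk')^2*(2*(100*q)+kk+kk')^2) := by
        exact mul_le_mul_of_nonneg_left h2 (sq_nonneg P)
  have hz : P*(100*q+kk) + P*(100*q+kk'+aa) ≤ P*(2*(100*q)+12*q) := by nlinarith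
  have hz0 : (0:ℝ) ≤ P*(100*q+kk) + P*(100*q+kk'+aa) := by nlinarith
  have e1 := pow_le_pow_left₀ hz0 hz 2
  have e2 := pow_le_pow_left₀ (by nlinarith : (0:ℝ) ≤ P*(2*(100*q))) hA 2
  have h3 : (P*(2*(100*q)+12*q))^2 ≤ (P*(2*(100*q)))^2 + (P*(2*(100*q)))^2 := by nlinarith [sq_nonneg P, mul_pos hP0 hP0, sq_nonneg (P*q), mul_pos (mul_pos hP0 hP0) (mul_pos (by linarith : (0:ℝ)<q) (by linarith : (0:ℝ)<q))]
  linarith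

-- small-scale object vs big-scale comb object, vertical separation
lemma keyBIGY (hq : 1 ≤ q) (hP : 1 ≤ P) (h9 : 9*P ≤ P') (hc : 1 ≤ c) (hc2 : c ≤ 8*q)
    (hk : 1 ≤ kk) (hk2 : kk ≤ 4*q) (hk' : 2*q+2 ≤ kk') (hk2' : kk' ≤ 4*q)
    (hc' : 1 ≤ c') (hc2' : c' ≤ 8*q) :
    P*(100*q+c) + P'*(100*q+c')
      ≤ P'*(kk'*(2*(100*q)+kk')) - P*(kk*(2*(100*q)+kk)) := by
  have hP'0 : (0:ℝ) < P' := by linarith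
  have c1 : (2*q+2)*(2*(100*q)+(2*q+2)) ≤ kk'*(2*(100*q)+kk') := by nlinarith
  have c2 : kk*(2*(100*q)+kk) ≤ (4*q)*(2*(100*q)+4*q) := by nlinarith
  have d1 : P'*((2*q+2)*(2*(100*q)+(2*q+2))) ≤ P'*(kk'*(2*(100*q)+kk')) :=
    mul_le_mul_of_nonneg_left c1 (le_of_lt hP'0)
  have d2 : P*(kk*(2*(100*q)+kk)) ≤ (P'/9)*((4*q)*(2*(100*q)+4*q)) := by
    apply mul_le_mul (by linarith) c2 (by nlinarith) (by linarith)
  have d3 : P*(100*q+c) ≤ (P'/9)*(100*q+8*q) := by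
    apply mul_le_mul (by linarith) (by linarith) (by linarith) (by linarith)
  have d4 : P'*(100*q+c') ≤ P'*(100*q+8*q) := by
    apply mul_le_mul_of_nonneg_left (by linarith) (le_of_lt hP'0)
  nlinarith [mul_pos hP'0 (show (0:ℝ) < q by linarith), mul_pos (mul_pos hP'0 (show (0:ℝ) < q by linarith)) (show (0:ℝ) < q by linarith)]

-- spine of big comb vs tooth of small comb, horizontal separation
lemma keyBIGX (hq : 1 ≤ q) (hP' : 1 ≤ P') (h9 : 9*P' ≤ P) (hk : 1 ≤ kk) (hk2 : kk ≤ 4*q)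
    (hk' : 1 ≤ kk') (ha : 1 ≤ aa) (hc' : 1 ≤ c') (hc2' : c' ≤ 8*q) :
    P*(100*q+kk) + P'*(100*q+c')
      ≤ 2*(100*q)*P - P'*(2*(100*q) - aa*(2*(100*q+kk')+aa)) := by
  have hP0 : (0:ℝ) < P := by linarith
  have hw : 2*(100*q) ≤ aa*(2*(100*q+kk')+aa) := by
    nlinarith [mul_nonneg (by linarith : (0:ℝ) ≤ aa-1) (by linarith : (0:ℝ) ≤ 2*(100*q+kk')+aa)]
  have d1 : P*kk ≤ P*(4*q) := by apply mul_le_mul_of_nonneg_left hk2 (by linarith)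
  have d2 : P'*(100*q+c') ≤ (P/9)*(100*q+8*q) := by
    apply mul_le_mul (by linarith) (by linarith) (by linarith) (by linarith)
  nlinarith [mul_nonneg (by linarith : (0:ℝ) ≤ P') (by linarith : (0:ℝ) ≤ aa*(2*(100*q+kk')+aa) - 2*(100*q)), mul_pos hP0 (show (0:ℝ) < q by linarith)]

-- W-W same row (1-D horizontal), aa+1 ≤ aa'
lemma keyWW1 (hq : 1 ≤ q) (hP : 1 ≤ P) (hkk : 1 ≤ kk) (ha : 1 ≤ aa) (h : aa + 1 ≤ aa') :
    P*(100*q+kk+aa) + P*(100*q+kk+aa')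
      ≤ (P*(2*(100*q) - aa*(2*(100*q+kk)+aa))) - (P*(2*(100*q) - aa'*(2*(100*q+kk)+aa'))) := by
  have e : (P*(2*(100*q) - aa*(2*(100*q+kk)+aa))) - (P*(2*(100*q) - aa'*(2*(100*q+kk)+aa')))
      = P*((aa'-aa)*(2*(100*q+kk)+aa+aa')) := by ring
  rw [e]
  nlinarith [mul_nonneg (by linarith : (0:ℝ) ≤ P)
    (mul_nonneg (by linarith : (0:ℝ) ≤ aa'-aa-1) (by linarith : (0:ℝ) ≤ 2*(100*q+kk)+aa+aa'))]

-- W-W same comb, rows ≥ 2 apart: vertical alone beats any horizontal term A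
lemma keyWW2 (hq : 1 ≤ q) (hP : 1 ≤ P) (hkk : 1 ≤ kk) (hkk2 : kk ≤ 4*q)
    (hkk' : 1 ≤ kk') (hkk2' : kk' ≤ 4*q) (hc : 1 ≤ c) (hc2 : c ≤ 8*q)
    (hc' : 1 ≤ c') (hc2' : c' ≤ 8*q) (hd : 4 ≤ (kk-kk')^2) :
    (P*(100*q+c) + P*(100*q+c'))^2
      ≤ A^2 + (P*(kk*(2*(100*q)+kk)) - P*(kk'*(2*(100*q)+kk')))^2 := by
  have hP0 : (0:ℝ) < P := by linarith
  have e : (P*(kk*(2*(100*q)+kk)) - P*(kk'*(2*(100*q)+kk')))^2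
      = P^2*((kk-kk')^2*(2*(100*q)+kk+kk')^2) := by ring
  have h1 : (2*(2*(100*q)+kk+kk'))^2 ≤ (kk-kk')^2*(2*(100*q)+kk+kk')^2 := by
    nlinarith [mul_le_mul hd (le_refl ((2*(100*q)+kk+kk')^2)) (by positivity) (by nlinarith)]
  have hz : P*(100*q+c) + P*(100*q+c') ≤ P*(2*(2*(100*q)+kk+kk')) := by nlinarith
  have hz0 : (0:ℝ) ≤ P*(100*q+c) + P*(100*q+c') := by nlinarith
  have e1 := pow_le_pow_left₀ hz0 hz 2
  have e2 : (P*(2*(2*(100*q)+kk+kk')))^2 ≤ P^2*((kk-kk')^2*(2*(100*q)+kk+kk')^2) := by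
    calc (P*(2*(2*(100*q)+kk+kk')))^2 = P^2*(2*(2*(100*q)+kk+kk'))^2 := by ring
    _ ≤ _ := mul_le_mul_of_nonneg_left h1 (sq_nonneg P)
  rw [e]
  nlinarith [sq_nonneg A]
end
end KoebeLB
namespace KoebeLB
open Metric
set_option maxHeartbeats 1000000

lemma zsq_le {z E : ℝ} (h0 : 0 ≤ z) (h : z ≤ E) : z^2 ≤ E^2 := by nlinarith

lemma one3 (n : ℕ) : (1:ℝ) ≤ 3^n := by
  induction n with
  | zero => norm_num
  | succ n ih => rw [pow_succ]; nlinarith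

lemma one9 (n : ℕ) : (1:ℝ) ≤ 9^n := by
  induction n with
  | zero => norm_num
  | succ n ih => rw [pow_succ]; nlinarith

lemma mono3 {n m : ℕ} (h : n ≤ m) : (3:ℝ)^n ≤ 3^m := by
  exact pow_le_pow_right₀ (by norm_num) h

lemma mono9 {n m : ℕ} (h : n ≤ m) : (9:ℝ)^n ≤ 9^m := by
  exact pow_le_pow_right₀ (by norm_num) h

lemma e93 (m : ℕ) : (9:ℝ)^m = 3^(2*m) := by
  rw [pow_mul]; norm_num

section
variable {s : ℕ}

lemma cast_q (hs : 1 ≤ s) : (1:ℝ) ≤ (s:ℝ) := by exact_mod_cast hs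

lemma kk_lb (k : Fin (4*s)) : (1:ℝ) ≤ ((k:ℕ):ℝ)+1 := by nlinarith [@Nat.cast_nonneg ℝ _ _ _ (k:ℕ)]

lemma kk_ub (k : Fin (4*s)) : ((k:ℕ):ℝ)+1 ≤ 4*(s:ℝ) := by
  have := k.isLt
  have : (k:ℕ) + 1 ≤ 4*s := this
  exact_mod_cast this

lemma row_lb (t : Fin s) : 2*(s:ℝ)+2 ≤ ((rowk s t : ℕ):ℝ) := by
  unfold rowk; push_cast; nlinarith [@Nat.cast_nonneg ℝ _ _ _ (t:ℕ)]

lemma row_lb1 (t : Fin s) : (1:ℝ) ≤ ((rowk s t : ℕ):ℝ) := by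
  nlinarith [row_lb t, @Nat.cast_nonneg ℝ _ _ _ s]

lemma row_ub (t : Fin s) : ((rowk s t : ℕ):ℝ) ≤ 4*(s:ℝ) := by
  have h : (t:ℕ) + 1 ≤ s := t.isLt
  have h' : ((t:ℕ):ℝ) + 1 ≤ (s:ℝ) := by exact_mod_cast h
  unfold rowk; push_cast; linarith

lemma rad_pos (hs : 1 ≤ s) (v : VV s) : 0 < rad s v := by
  have hq := cast_q hs
  rcases v with i | ⟨m,k⟩ | ⟨m,t,a⟩ <;> simp only [rad]
  · nlinarith [one3 (i:ℕ)]
  · positivity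
  · positivity

-- T vs T, ordered
lemma sepTT_core (hs : 1 ≤ s) {i i' : Fin (2*s+1)} (h : (i:ℕ) < (i':ℕ)) :
    rad s (.inl i) + rad s (.inl i') ≤ dist (ctr s (.inl i)) (ctr s (.inl i')) := by
  have hq := cast_q hs
  have h3 : 3*(3:ℝ)^(i:ℕ) ≤ 3^(i':ℕ) := by
    calc 3*(3:ℝ)^(i:ℕ) = 3^((i:ℕ)+1) := by rw [pow_succ]; ring
    _ ≤ _ := mono3 h
  have key := keyTT hq (one3 (i:ℕ)) h3
  simp only [rad, ctr]
  apply dist_pt_ge (by positivity)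
  have h2 := zsq_le (by positivity) key
  linarith [h2]

lemma sepTT (hs : 1 ≤ s) {i i' : Fin (2*s+1)} (h : i ≠ i') :
    rad s (.inl i) + rad s (.inl i') ≤ dist (ctr s (.inl i)) (ctr s (.inl i')) := by
  rcases Nat.lt_trichotomy (i:ℕ) (i':ℕ) with hl | he | hg
  · exact sepTT_core hs hl
  · exact absurd (Fin.ext he) h
  · rw [dist_comm, add_comm]; exact sepTT_core hs hg

-- T vs S
lemma sepTS (hs : 1 ≤ s) (i : Fin (2*s+1)) (m : Fin (s+1)) (k : Fin (4*s)) :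
    rad s (.inl i) + rad s (.inr (.inl (m,k)))
      ≤ dist (ctr s (.inl i)) (ctr s (.inr (.inl (m,k)))) := by
  have hq := cast_q hs
  have hP := one9 (m:ℕ)
  have hu := one3 (i:ℕ)
  have hkk := kk_lb k
  have hkk2 := kk_ub k
  rcases Nat.lt_trichotomy (i:ℕ) (2*(m:ℕ)) with hl | he | hg
  · have h3 : 3*(3:ℝ)^(i:ℕ) ≤ 9^(m:ℕ) := by
      rw [e93]
      calc 3*(3:ℝ)^(i:ℕ) = 3^((i:ℕ)+1) := by rw [pow_succ]; ring
      _ ≤ _ := mono3 hl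
    have key := keyTS1 hq hP hu hkk h3
    simp only [rad, ctr]
    apply dist_pt_ge (by positivity)
    have h2 := zsq_le (by positivity) key
    linarith [h2, sq_nonneg (2*(100*(s:ℝ))*3^(i:ℕ) - 2*(100*(s:ℝ))*9^(m:ℕ))]
  · have e : (3:ℝ)^(i:ℕ) = 9^(m:ℕ) := by rw [he, e93]
    have key := keyTS2 hq hP hkk
    simp only [rad, ctr]
    rw [e]
    apply dist_pt_ge (by positivity)
    have h2 := zsq_le (by positivity) key
    linarith [h2]
  · rcases Nat.lt_or_ge (i:ℕ) (2*(m:ℕ)+2) with hi | hi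
    · have he : (i:ℕ) = 2*(m:ℕ)+1 := by omega
      have e : (3:ℝ)^(i:ℕ) = 3*9^(m:ℕ) := by rw [he, e93, pow_succ]; ring
      have key := keyTS3 hq hP hkk hkk2
      simp only [rad, ctr]
      rw [e]
      apply dist_pt_ge (by positivity)
      linarith [key]
    · have h9 : 9*(9:ℝ)^(m:ℕ) ≤ 3^(i:ℕ) := by
        calc 9*(9:ℝ)^(m:ℕ) = 3^(2*(m:ℕ)+2) := by rw [e93, pow_succ, pow_succ]; ring
        _ ≤ _ := mono3 hi
      have key := keyTS4 hq hP hkk hkk2 h9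
      simp only [rad, ctr]
      apply dist_pt_ge (by positivity)
      have h2 := zsq_le (by positivity) key
      linarith [h2, sq_nonneg ((9:ℝ)^(m:ℕ) * ((((k:ℕ):ℝ)+1) * (2*(100*(s:ℝ)) + (((k:ℕ):ℝ)+1))))]

-- T vs W
lemma sepTW (hs : 1 ≤ s) (i : Fin (2*s+1)) (m : Fin (s+1)) (t : Fin s) (a : Fin (4*s)) :
    rad s (.inl i) + rad s (.inr (.inr (m,t,a)))
      ≤ dist (ctr s (.inl i)) (ctr s (.inr (.inr (m,t,a)))) := by
  have hq := cast_q hs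
  have key := keyTW hq (one9 (m:ℕ)) (one3 (i:ℕ)) (row_lb t) (row_ub t) (kk_lb a) (kk_ub a)
  simp only [rad, ctr]
  apply dist_pt_ge (by positivity)
  linarith [key]

-- S vs S, different scales, ordered
lemma sepSS_core (hs : 1 ≤ s) {m m' : Fin (s+1)} {k k' : Fin (4*s)} (h : (m:ℕ) < (m':ℕ)) :
    rad s (.inr (.inl (m,k))) + rad s (.inr (.inl (m',k')))
      ≤ dist (ctr s (.inr (.inl (m,k)))) (ctr s (.inr (.inl (m',k')))) := by
  have hq := cast_q hs
  have h9 : 9*(9:ℝ)^(m:ℕ) ≤ 9^(m':ℕ) := by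
    calc 9*(9:ℝ)^(m:ℕ) = 9^((m:ℕ)+1) := by rw [pow_succ]; ring
    _ ≤ _ := mono9 h
  have key := keySS2 hq (one9 (m:ℕ)) (kk_lb k) (kk_ub k) (kk_lb k')
    (by nlinarith [kk_ub k', cast_q hs] : ((k':ℕ):ℝ)+1 ≤ 8*(s:ℝ)) h9
  simp only [rad, ctr]
  apply dist_pt_ge (by positivity)
  have h2 := zsq_le (by positivity) key
  linarith [h2, sq_nonneg ((9:ℝ)^(m:ℕ) * ((((k:ℕ):ℝ)+1) * (2*(100*(s:ℝ)) + (((k:ℕ):ℝ)+1))) -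
    (9:ℝ)^(m':ℕ) * ((((k':ℕ):ℝ)+1) * (2*(100*(s:ℝ)) + (((k':ℕ):ℝ)+1))))]

-- S vs S same scale, ordered rows
lemma sepSS_core2 (hs : 1 ≤ s) {m : Fin (s+1)} {k k' : Fin (4*s)} (h : (k:ℕ) < (k':ℕ)) :
    rad s (.inr (.inl (m,k))) + rad s (.inr (.inl (m,k')))
      ≤ dist (ctr s (.inr (.inl (m,k)))) (ctr s (.inr (.inl (m,k')))) := by
  have hq := cast_q hs
  have hd : ((k:ℕ):ℝ)+1+1 ≤ ((k':ℕ):ℝ)+1 := by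
    have : (k:ℕ)+1 ≤ (k':ℕ) := h
    have := (Nat.cast_le (α := ℝ)).mpr this
    push_cast at this; linarith
  have key := keySS1 hq (one9 (m:ℕ)) (kk_lb k) hd
  simp only [rad, ctr]
  apply dist_pt_ge (by positivity)
  have h2 := zsq_le (by positivity) key
  linarith [h2, sq_nonneg (2*(100*(s:ℝ))*9^(m:ℕ) - 2*(100*(s:ℝ))*9^(m:ℕ))]

lemma sepSS (hs : 1 ≤ s) {m m' : Fin (s+1)} {k k' : Fin (4*s)}
    (h : (⟨m,k⟩ : Fin (s+1) × Fin (4*s)) ≠ ⟨m',k'⟩) :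
    rad s (.inr (.inl (m,k))) + rad s (.inr (.inl (m',k')))
      ≤ dist (ctr s (.inr (.inl (m,k)))) (ctr s (.inr (.inl (m',k')))) := by
  rcases Nat.lt_trichotomy (m:ℕ) (m':ℕ) with hl | he | hg
  · exact sepSS_core hs hl
  · have hm : m = m' := Fin.ext he
    subst hm
    have hk : k ≠ k' := by
      intro hk; exact h (by rw [hk])
    rcases Nat.lt_trichotomy (k:ℕ) (k':ℕ) with hl' | he' | hg'
    · exact sepSS_core2 hs hl'
    · exact absurd (Fin.ext he') hk
    · rw [dist_comm, add_comm]; exact sepSS_core2 hs hg'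
  · rw [dist_comm, add_comm]; exact sepSS_core hs hg

end
end KoebeLB
namespace KoebeLB
open Metric
set_option maxHeartbeats 1000000
section
variable {s : ℕ}

lemma row8 (hs : 1 ≤ s) (t : Fin s) (a : Fin (4*s)) :
    ((rowk s t : ℕ):ℝ) + (((a:ℕ):ℝ)+1) ≤ 8*(s:ℝ) := by
  nlinarith [row_ub t, kk_ub a]

lemma row8' (t : Fin s) (a : Fin (4*s)) :
    (1:ℝ) ≤ ((rowk s t : ℕ):ℝ) + (((a:ℕ):ℝ)+1) := by
  nlinarith [row_lb1 t, @Nat.cast_nonneg ℝ _ _ _ (a:ℕ)]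

-- S vs W
lemma sepSW (hs : 1 ≤ s) (m : Fin (s+1)) (k : Fin (4*s)) (m' : Fin (s+1)) (t : Fin s)
    (a : Fin (4*s)) :
    rad s (.inr (.inl (m,k))) + rad s (.inr (.inr (m',t,a)))
      ≤ dist (ctr s (.inr (.inl (m,k)))) (ctr s (.inr (.inr (m',t,a)))) := by
  have hq := cast_q hs
  rcases Nat.lt_trichotomy (m:ℕ) (m':ℕ) with hl | he | hg
  · have h9 : 9*(9:ℝ)^(m:ℕ) ≤ 9^(m':ℕ) := by
      calc 9*(9:ℝ)^(m:ℕ) = 9^((m:ℕ)+1) := by rw [pow_succ]; ring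
      _ ≤ _ := mono9 hl
    have key := keyBIGY hq (one9 (m:ℕ)) h9 (kk_lb k)
      (by nlinarith [kk_ub k] : ((k:ℕ):ℝ)+1 ≤ 8*(s:ℝ)) (kk_lb k) (kk_ub k)
      (row_lb t) (row_ub t) (row8' t a) (row8 hs t a)
    simp only [rad, ctr]
    apply dist_pt_ge (by positivity)
    have h2 := zsq_le (by positivity) key
    linarith [h2, sq_nonneg (2*(100*(s:ℝ))*9^(m:ℕ) -
      9^(m':ℕ) * (2*(100*(s:ℝ)) - (((a:ℕ):ℝ)+1) *
        (2*(100*(s:ℝ) + ((rowk s t : ℕ):ℝ)) + (((a:ℕ):ℝ)+1))))]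
  · have hm : m = m' := Fin.ext he
    subst hm
    by_cases hk : (k:ℕ)+1 = rowk s t
    · have e : ((k:ℕ):ℝ)+1 = ((rowk s t:ℕ):ℝ) := by exact_mod_cast hk
      have key := keySW1 hq (one9 (m:ℕ)) (row_lb1 t) (kk_lb a)
      simp only [rad, ctr]
      rw [e]
      apply dist_pt_ge (by positivity)
      have h2 := zsq_le (by positivity) key
      linarith [h2, sq_nonneg ((9:ℝ)^(m:ℕ) * (((rowk s t:ℕ):ℝ) * (2*(100*(s:ℝ)) + ((rowk s t:ℕ):ℝ))) -
        (9:ℝ)^(m:ℕ) * (((rowk s t:ℕ):ℝ) * (2*(100*(s:ℝ)) + ((rowk s t:ℕ):ℝ))))]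
    · have hd : (1:ℝ) ≤ ((((k:ℕ):ℝ)+1) - ((rowk s t:ℕ):ℝ))^2 := by
        rcases Nat.lt_or_ge ((k:ℕ)+1) (rowk s t) with hlt | hge
        · have : ((k:ℕ):ℝ)+1+1 ≤ ((rowk s t:ℕ):ℝ) := by exact_mod_cast hlt
          nlinarith
        · have hgt : rowk s t < (k:ℕ)+1 := lt_of_le_of_ne hge (fun hh => hk hh.symm)
          have : ((rowk s t:ℕ):ℝ)+1 ≤ ((k:ℕ):ℝ)+1 := by exact_mod_cast hgt
          nlinarith
      have key := keySW2 hq (one9 (m:ℕ)) (kk_lb k) (kk_ub k) (row_lb1 t) (row_ub t)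
        (kk_lb a) (kk_ub a) hd
      simp only [rad, ctr]
      apply dist_pt_ge (by positivity)
      linarith [key]
  · have h9 : 9*(9:ℝ)^(m':ℕ) ≤ 9^(m:ℕ) := by
      calc 9*(9:ℝ)^(m':ℕ) = 9^((m':ℕ)+1) := by rw [pow_succ]; ring
      _ ≤ _ := mono9 hg
    have key := keyBIGX hq (one9 (m':ℕ)) h9 (kk_lb k) (kk_ub k) (row_lb1 t) (kk_lb a)
      (row8' t a) (row8 hs t a)
    simp only [rad, ctr]
    apply dist_pt_ge (by positivity)
    have h2 := zsq_le (by positivity) key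
    linarith [h2, sq_nonneg ((9:ℝ)^(m:ℕ) * ((((k:ℕ):ℝ)+1) * (2*(100*(s:ℝ)) + (((k:ℕ):ℝ)+1))) -
      (9:ℝ)^(m':ℕ) * (((rowk s t:ℕ):ℝ) * (2*(100*(s:ℝ)) + ((rowk s t:ℕ):ℝ))))]

-- W vs W, different scales, ordered
lemma sepWW_core (hs : 1 ≤ s) {m m' : Fin (s+1)} (hl : (m:ℕ) < (m':ℕ)) (t t' : Fin s)
    (a a' : Fin (4*s)) :
    rad s (.inr (.inr (m,t,a))) + rad s (.inr (.inr (m',t',a')))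
      ≤ dist (ctr s (.inr (.inr (m,t,a)))) (ctr s (.inr (.inr (m',t',a')))) := by
  have hq := cast_q hs
  have h9 : 9*(9:ℝ)^(m:ℕ) ≤ 9^(m':ℕ) := by
    calc 9*(9:ℝ)^(m:ℕ) = 9^((m:ℕ)+1) := by rw [pow_succ]; ring
    _ ≤ _ := mono9 hl
  have key := keyBIGY hq (one9 (m:ℕ)) h9 (row8' t a) (row8 hs t a) (row_lb1 t) (row_ub t)
    (row_lb t') (row_ub t') (row8' t' a') (row8 hs t' a')
  simp only [rad, ctr]
  apply dist_pt_ge (by positivity)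
  have h2 := zsq_le (by positivity) key
  linarith [h2, sq_nonneg ((9:ℝ)^(m:ℕ) * (2*(100*(s:ℝ)) - (((a:ℕ):ℝ)+1) *
      (2*(100*(s:ℝ) + ((rowk s t : ℕ):ℝ)) + (((a:ℕ):ℝ)+1))) -
    (9:ℝ)^(m':ℕ) * (2*(100*(s:ℝ)) - (((a':ℕ):ℝ)+1) *
      (2*(100*(s:ℝ) + ((rowk s t' : ℕ):ℝ)) + (((a':ℕ):ℝ)+1))))]

-- W vs W, same comb same row, ordered
lemma sepWW_core2 (hs : 1 ≤ s) (m : Fin (s+1)) (t : Fin s) {a a' : Fin (4*s)}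
    (hl : (a:ℕ) < (a':ℕ)) :
    rad s (.inr (.inr (m,t,a))) + rad s (.inr (.inr (m,t,a')))
      ≤ dist (ctr s (.inr (.inr (m,t,a)))) (ctr s (.inr (.inr (m,t,a')))) := by
  have hq := cast_q hs
  have hd : (((a:ℕ):ℝ)+1)+1 ≤ ((a':ℕ):ℝ)+1 := by
    have : (a:ℕ)+1+1 ≤ (a':ℕ)+1 := by omega
    exact_mod_cast this
  have key := keyWW1 hq (one9 (m:ℕ)) (row_lb1 t) (kk_lb a) hd
  simp only [rad, ctr]
  apply dist_pt_ge (by positivity)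
  have h2 := zsq_le (by positivity) key
  linarith [h2, sq_nonneg ((9:ℝ)^(m:ℕ) * (((rowk s t:ℕ):ℝ) * (2*(100*(s:ℝ)) + ((rowk s t:ℕ):ℝ))) -
    (9:ℝ)^(m:ℕ) * (((rowk s t:ℕ):ℝ) * (2*(100*(s:ℝ)) + ((rowk s t:ℕ):ℝ))))]

lemma sepWW (hs : 1 ≤ s) {m m' : Fin (s+1)} {t t' : Fin s} {a a' : Fin (4*s)}
    (h : ((m,t,a) : Fin (s+1) × Fin s × Fin (4*s)) ≠ (m',t',a')) :
    rad s (.inr (.inr (m,t,a))) + rad s (.inr (.inr (m',t',a')))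
      ≤ dist (ctr s (.inr (.inr (m,t,a)))) (ctr s (.inr (.inr (m',t',a')))) := by
  have hq := cast_q hs
  rcases Nat.lt_trichotomy (m:ℕ) (m':ℕ) with hl | he | hg
  · exact sepWW_core hs hl t t' a a'
  · have hm : m = m' := Fin.ext he
    subst hm
    by_cases ht : t = t'
    · subst ht
      have ha : a ≠ a' := by
        intro hh; exact h (by rw [hh])
      rcases Nat.lt_trichotomy (a:ℕ) (a':ℕ) with hl' | he' | hg'
      · exact sepWW_core2 hs m t hl'
      · exact absurd (Fin.ext he') ha
      · rw [dist_comm, add_comm]; exact sepWW_core2 hs m t hg'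
    · have hd : (4:ℝ) ≤ (((rowk s t:ℕ):ℝ) - ((rowk s t':ℕ):ℝ))^2 := by
        rcases Nat.lt_trichotomy (t:ℕ) (t':ℕ) with hl' | he' | hg'
        · have : rowk s t + 2 ≤ rowk s t' := by unfold rowk; omega
          have : ((rowk s t:ℕ):ℝ) + 2 ≤ ((rowk s t':ℕ):ℝ) := by exact_mod_cast this
          nlinarith
        · exact absurd (Fin.ext he') ht
        · have : rowk s t' + 2 ≤ rowk s t := by unfold rowk; omega
          have : ((rowk s t':ℕ):ℝ) + 2 ≤ ((rowk s t:ℕ):ℝ) := by exact_mod_cast this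
          nlinarith
      have key := keyWW2 (A := (9:ℝ)^(m:ℕ) * (2*(100*(s:ℝ)) - (((a:ℕ):ℝ)+1) *
          (2*(100*(s:ℝ) + ((rowk s t : ℕ):ℝ)) + (((a:ℕ):ℝ)+1))) -
        (9:ℝ)^(m:ℕ) * (2*(100*(s:ℝ)) - (((a':ℕ):ℝ)+1) *
          (2*(100*(s:ℝ) + ((rowk s t' : ℕ):ℝ)) + (((a':ℕ):ℝ)+1))))
        hq (one9 (m:ℕ)) (row_lb1 t) (row_ub t) (row_lb1 t') (row_ub t')
        (row8' t a) (row8 hs t a) (row8' t' a') (row8 hs t' a') hd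
      simp only [rad, ctr]
      apply dist_pt_ge (by positivity)
      linarith [key]
  · rw [dist_comm, add_comm]; exact sepWW_core hs hg t' t a' a

/-- master separation lemma -/
lemma sep (hs : 1 ≤ s) (v w : VV s) (h : v ≠ w) :
    rad s v + rad s w ≤ dist (ctr s v) (ctr s w) := by
  rcases v with i | ⟨m,k⟩ | ⟨m,t,a⟩ <;> rcases w with i' | ⟨m',k'⟩ | ⟨m',t',a'⟩
  · exact sepTT hs (fun hh => h (by rw [hh]))
  · exact sepTS hs i m' k'
  · exact sepTW hs i m' t' a'
  · rw [dist_comm, add_comm]; exact sepTS hs i' m k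
  · exact sepSS hs (fun hh => h (by rw [hh]))
  · exact sepSW hs m k m' t' a'
  · rw [dist_comm, add_comm]; exact sepTW hs i' m t a
  · rw [dist_comm, add_comm]; exact sepSW hs m' k' m t a
  · exact sepWW hs (fun hh => h (by rw [hh]))

end
end KoebeLB
namespace KoebeLB
open Metric SimpleGraph
set_option maxHeartbeats 1000000

lemma isPath_concat {V : Type} {G : SimpleGraph V} {u v w : V} {p : G.Walk u v}
    (hp : p.IsPath) (h : G.Adj v w) (hw : w ∉ p.support) : (p.concat h).IsPath := by
  rw [Walk.isPath_def, Walk.support_concat]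
  refine List.Nodup.append hp.support_nodup (List.nodup_singleton w) ?_
  intro a ha hb
  rw [List.mem_singleton] at hb; subst hb; exact hw ha

section
variable {s : ℕ}

def R (s : ℕ) : VV s → VV s → Prop
  | .inl i, .inl j => (j:ℕ) = (i:ℕ) + 1
  | .inl i, .inr (.inl (m,k)) => (i:ℕ) = 2*(m:ℕ) ∧ (k:ℕ) = 0
  | .inr (.inl (m,k)), .inr (.inl (m',k')) => m = m' ∧ (k':ℕ) = (k:ℕ) + 1
  | .inr (.inl (m,k)), .inr (.inr (m',t,a)) => m = m' ∧ (k:ℕ) + 1 = rowk s t ∧ (a:ℕ) = 0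
  | .inr (.inr (m,t,a)), .inr (.inr (m',t',a')) => m = m' ∧ t = t' ∧ (a':ℕ) = (a:ℕ) + 1
  | _, _ => False

def G (s : ℕ) : SimpleGraph (VV s) := SimpleGraph.fromRel (R s)

def vT (s : ℕ) (i : ℕ) (h : i < 2*s+1) : VV s := .inl ⟨i,h⟩
def vS (s : ℕ) (m : Fin (s+1)) (k0 : ℕ) (h : k0 < 4*s) : VV s := .inr (.inl (m, ⟨k0,h⟩))
def vW (s : ℕ) (m : Fin (s+1)) (t : Fin s) (a0 : ℕ) (h : a0 < 4*s) : VV s :=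
  .inr (.inr (m,t,⟨a0,h⟩))

lemma adjTT (i : ℕ) (h : i+1 < 2*s+1) :
    (G s).Adj (vT s i (by omega)) (vT s (i+1) h) := by
  rw [G, fromRel_adj]
  exact ⟨by simp [vT, Fin.ext_iff], Or.inl rfl⟩

lemma adjTS (m : Fin (s+1)) (h : 2*(m:ℕ) < 2*s+1) (h' : 0 < 4*s) :
    (G s).Adj (vT s (2*(m:ℕ)) h) (vS s m 0 h') := by
  rw [G, fromRel_adj]
  exact ⟨by simp [vT, vS], Or.inl ⟨rfl, rfl⟩⟩

lemma adjSS (m : Fin (s+1)) (k0 : ℕ) (h : k0 < 4*s) (h' : k0+1 < 4*s) :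
    (G s).Adj (vS s m k0 h) (vS s m (k0+1) h') := by
  rw [G, fromRel_adj]
  exact ⟨by simp [vS, Fin.ext_iff], Or.inl ⟨rfl, rfl⟩⟩

lemma adjSW (m : Fin (s+1)) (t : Fin s) (h : 2*s+2*(t:ℕ)+1 < 4*s) (h' : 0 < 4*s) :
    (G s).Adj (vS s m (2*s+2*(t:ℕ)+1) h) (vW s m t 0 h') := by
  rw [G, fromRel_adj]
  refine ⟨by simp [vS, vW], Or.inl ⟨rfl, ?_, rfl⟩⟩
  simp [rowk]; omega

lemma adjWW (m : Fin (s+1)) (t : Fin s) (a0 : ℕ) (h : a0 < 4*s) (h' : a0+1 < 4*s) :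
    (G s).Adj (vW s m t a0 h) (vW s m t (a0+1) h') := by
  rw [G, fromRel_adj]
  exact ⟨by simp [vW, Fin.ext_iff], Or.inl ⟨rfl, rfl, rfl⟩⟩

/-- trunk walk from the root to `T i`. -/
def trunkW (s : ℕ) : (i : ℕ) → (h : i < 2*s+1) → (G s).Walk (vT s 0 (by omega)) (vT s i h)
  | 0, _ => Walk.nil
  | i+1, h => (trunkW s i (by omega)).concat (adjTT i h)

lemma trunkW_length : ∀ (i : ℕ) (h : i < 2*s+1), (trunkW s i h).length = i
  | 0, _ => rfl
  | i+1, h => by rw [trunkW, Walk.length_concat, trunkW_length i]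

lemma trunkW_support : ∀ (i : ℕ) (h : i < 2*s+1) (x : VV s), x ∈ (trunkW s i h).support →
    ∃ (j : ℕ) (hj : j < 2*s+1), j ≤ i ∧ x = vT s j hj
  | 0, h, x, hx => by
    rw [trunkW] at hx
    simp only [Walk.support_nil, List.mem_singleton] at hx
    exact ⟨0, by omega, le_refl 0, hx⟩
  | i+1, h, x, hx => by
    rw [trunkW, Walk.support_concat, List.mem_append] at hx
    rcases hx with hx | hx
    · obtain ⟨j, hj, hji, hxe⟩ := trunkW_support i (by omega) x hx
      exact ⟨j, hj, by omega, hxe⟩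
    · rw [List.mem_singleton] at hx
      exact ⟨i+1, h, le_refl _, hx⟩

lemma trunkW_isPath : ∀ (i : ℕ) (h : i < 2*s+1), (trunkW s i h).IsPath
  | 0, _ => Walk.IsPath.nil
  | i+1, h => by
    refine isPath_concat (trunkW_isPath i (by omega)) _ ?_
    intro hx
    obtain ⟨j, hj, hji, hxe⟩ := trunkW_support i (by omega) _ hx
    simp only [vT, Sum.inl.injEq, Fin.ext_iff] at hxe
    omega

/-- spine walk from the root to `S m k0`. -/
def spineW (s : ℕ) (m : Fin (s+1)) (hm : 2*(m:ℕ) < 2*s+1) :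
    (k0 : ℕ) → (h : k0 < 4*s) → (G s).Walk (vT s 0 (by omega)) (vS s m k0 h)
  | 0, h => (trunkW s (2*(m:ℕ)) hm).concat (adjTS m hm h)
  | k0+1, h => (spineW s m hm k0 (by omega)).concat (adjSS m k0 (by omega) h)

lemma spineW_length (m : Fin (s+1)) (hm : 2*(m:ℕ) < 2*s+1) :
    ∀ (k0 : ℕ) (h : k0 < 4*s), (spineW s m hm k0 h).length = 2*(m:ℕ) + 1 + k0
  | 0, h => by rw [spineW, Walk.length_concat, trunkW_length]
  | k0+1, h => by
    rw [spineW, Walk.length_concat, spineW_length m hm k0]; ring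

lemma spineW_support (m : Fin (s+1)) (hm : 2*(m:ℕ) < 2*s+1) :
    ∀ (k0 : ℕ) (h : k0 < 4*s) (x : VV s), x ∈ (spineW s m hm k0 h).support →
      (∃ (j : ℕ) (hj : j < 2*s+1), j ≤ 2*(m:ℕ) ∧ x = vT s j hj) ∨
      (∃ (j : ℕ) (hj : j < 4*s), j ≤ k0 ∧ x = vS s m j hj)
  | 0, h, x, hx => by
    rw [spineW, Walk.support_concat, List.mem_append] at hx
    rcases hx with hx | hx
    · obtain ⟨j, hj, hji, hxe⟩ := trunkW_support _ _ x hx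
      exact Or.inl ⟨j, hj, hji, hxe⟩
    · rw [List.mem_singleton] at hx
      exact Or.inr ⟨0, h, le_refl _, hx⟩
  | k0+1, h, x, hx => by
    rw [spineW, Walk.support_concat, List.mem_append] at hx
    rcases hx with hx | hx
    · rcases spineW_support m hm k0 (by omega) x hx with h1 | ⟨j, hj, hji, hxe⟩
      · exact Or.inl h1
      · exact Or.inr ⟨j, hj, by omega, hxe⟩
    · rw [List.mem_singleton] at hx
      exact Or.inr ⟨k0+1, h, le_refl _, hx⟩

lemma spineW_isPath (m : Fin (s+1)) (hm : 2*(m:ℕ) < 2*s+1) :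
    ∀ (k0 : ℕ) (h : k0 < 4*s), (spineW s m hm k0 h).IsPath
  | 0, h => by
    refine isPath_concat (trunkW_isPath _ _) _ ?_
    intro hx
    obtain ⟨j, hj, hji, hxe⟩ := trunkW_support _ _ _ hx
    simp [vS, vT] at hxe
  | k0+1, h => by
    refine isPath_concat (spineW_isPath m hm k0 (by omega)) _ ?_
    intro hx
    rcases spineW_support m hm k0 (by omega) _ hx with ⟨j, hj, hji, hxe⟩ | ⟨j, hj, hji, hxe⟩
    · simp [vS, vT] at hxe
    · simp only [vS, Sum.inr.injEq, Sum.inl.injEq, Prod.mk.injEq, Fin.ext_iff] at hxe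
      omega

/-- tooth walk from the root to `W m t a0`. -/
def toothW (s : ℕ) (m : Fin (s+1)) (t : Fin s) (hm : 2*(m:ℕ) < 2*s+1)
    (hrow : 2*s+2*(t:ℕ)+1 < 4*s) :
    (a0 : ℕ) → (h : a0 < 4*s) → (G s).Walk (vT s 0 (by omega)) (vW s m t a0 h)
  | 0, h => (spineW s m hm (2*s+2*(t:ℕ)+1) hrow).concat (adjSW m t hrow h)
  | a0+1, h => (toothW s m t hm hrow a0 (by omega)).concat (adjWW m t a0 (by omega) h)

lemma toothW_length (m : Fin (s+1)) (t : Fin s) (hm : 2*(m:ℕ) < 2*s+1)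
    (hrow : 2*s+2*(t:ℕ)+1 < 4*s) :
    ∀ (a0 : ℕ) (h : a0 < 4*s),
      (toothW s m t hm hrow a0 h).length = 2*(m:ℕ) + 2*s + 2*(t:ℕ) + a0 + 3
  | 0, h => by rw [toothW, Walk.length_concat, spineW_length]; ring
  | a0+1, h => by rw [toothW, Walk.length_concat, toothW_length m t hm hrow a0]; ring

lemma toothW_support (m : Fin (s+1)) (t : Fin s) (hm : 2*(m:ℕ) < 2*s+1)
    (hrow : 2*s+2*(t:ℕ)+1 < 4*s) :
    ∀ (a0 : ℕ) (h : a0 < 4*s) (x : VV s), x ∈ (toothW s m t hm hrow a0 h).support →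
      (∃ (j : ℕ) (hj : j < 2*s+1), j ≤ 2*(m:ℕ) ∧ x = vT s j hj) ∨
      (∃ (j : ℕ) (hj : j < 4*s), j ≤ 2*s+2*(t:ℕ)+1 ∧ x = vS s m j hj) ∨
      (∃ (b : ℕ) (hb : b < 4*s), b ≤ a0 ∧ x = vW s m t b hb)
  | 0, h, x, hx => by
    rw [toothW, Walk.support_concat, List.mem_append] at hx
    rcases hx with hx | hx
    · rcases spineW_support m hm _ hrow x hx with h1 | h2
      · exact Or.inl h1
      · exact Or.inr (Or.inl h2)
    · rw [List.mem_singleton] at hx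
      exact Or.inr (Or.inr ⟨0, h, le_refl _, hx⟩)
  | a0+1, h, x, hx => by
    rw [toothW, Walk.support_concat, List.mem_append] at hx
    rcases hx with hx | hx
    · rcases toothW_support m t hm hrow a0 (by omega) x hx with h1 | h2 | ⟨b, hb, hba, hxe⟩
      · exact Or.inl h1
      · exact Or.inr (Or.inl h2)
      · exact Or.inr (Or.inr ⟨b, hb, by omega, hxe⟩)
    · rw [List.mem_singleton] at hx
      exact Or.inr (Or.inr ⟨a0+1, h, le_refl _, hx⟩)

lemma toothW_isPath (m : Fin (s+1)) (t : Fin s) (hm : 2*(m:ℕ) < 2*s+1)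
    (hrow : 2*s+2*(t:ℕ)+1 < 4*s) :
    ∀ (a0 : ℕ) (h : a0 < 4*s), (toothW s m t hm hrow a0 h).IsPath
  | 0, h => by
    refine isPath_concat (spineW_isPath _ _ _ _) _ ?_
    intro hx
    rcases spineW_support m hm _ hrow _ hx with ⟨j, hj, hji, hxe⟩ | ⟨j, hj, hji, hxe⟩
    · simp [vW, vT] at hxe
    · simp [vW, vS] at hxe
  | a0+1, h => by
    refine isPath_concat (toothW_isPath m t hm hrow a0 (by omega)) _ ?_
    intro hx
    rcases toothW_support m t hm hrow a0 (by omega) _ hx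
      with ⟨j, hj, hji, hxe⟩ | ⟨j, hj, hji, hxe⟩ | ⟨b, hb, hba, hxe⟩
    · simp [vW, vT] at hxe
    · simp [vW, vS] at hxe
    · simp only [vW, Sum.inr.injEq, Prod.mk.injEq, Fin.ext_iff] at hxe
      omega

end
end KoebeLB
namespace KoebeLB
open Metric SimpleGraph
set_option maxHeartbeats 1000000
section
variable {s : ℕ}

lemma touchR (hs : 1 ≤ s) {v w : VV s} (hr : R s v w) :
    (closedBall (ctr s v) (rad s v) ∩ closedBall (ctr s w) (rad s w)).Nonempty := by
  have hq := cast_q hs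
  rcases v with i | ⟨m,k⟩ | ⟨m,t,a⟩ <;> rcases w with i' | ⟨m',k'⟩ | ⟨m',t',a'⟩
  · -- T T
    have hr' : (i':ℕ) = (i:ℕ) + 1 := hr
    have e : (3:ℝ)^(i':ℕ) = 3*3^(i:ℕ) := by rw [hr', pow_succ]; ring
    simp only [ctr, rad]
    rw [e]
    exact touch_horiz (by positivity) (by positivity) (by ring)
  · -- T S
    have hr' : (i:ℕ) = 2*(m':ℕ) ∧ (k':ℕ) = 0 := hr
    have e : (3:ℝ)^(i:ℕ) = 9^(m':ℕ) := by rw [hr'.1, e93]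
    have e2 : ((k':ℕ):ℝ) = 0 := by exact_mod_cast hr'.2
    simp only [ctr, rad]
    rw [e, e2]
    exact touch_vert (by positivity) (by positivity) (by ring)
  · exact hr.elim
  · exact hr.elim
  · -- S S
    have hr' : m = m' ∧ (k':ℕ) = (k:ℕ) + 1 := hr
    obtain ⟨hm, hk⟩ := hr'
    subst hm
    have e : ((k':ℕ):ℝ) = ((k:ℕ):ℝ) + 1 := by exact_mod_cast hk
    simp only [ctr, rad]
    rw [e]
    exact touch_vert (by positivity) (by positivity) (by ring)
  · -- S W
    have hr' : m = m' ∧ (k:ℕ) + 1 = rowk s t' ∧ (a':ℕ) = 0 := hr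
    obtain ⟨hm, hk, ha⟩ := hr'
    subst hm
    have e : ((k:ℕ):ℝ) + 1 = ((rowk s t':ℕ):ℝ) := by exact_mod_cast hk
    have e2 : ((a':ℕ):ℝ) = 0 := by exact_mod_cast ha
    simp only [ctr, rad]
    rw [e, e2, Set.inter_comm]
    exact touch_horiz (by positivity) (by positivity) (by ring)
  · exact hr.elim
  · exact hr.elim
  · -- W W
    have hr' : m = m' ∧ t = t' ∧ (a':ℕ) = (a:ℕ) + 1 := hr
    obtain ⟨hm, ht, ha⟩ := hr'
    subst hm; subst ht
    have e : ((a':ℕ):ℝ) = ((a:ℕ):ℝ) + 1 := by exact_mod_cast ha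
    simp only [ctr, rad]
    rw [e, Set.inter_comm]
    exact touch_horiz (by positivity) (by positivity) (by ring)

lemma touchAdj (hs : 1 ≤ s) {v w : VV s} (h : (G s).Adj v w) :
    (closedBall (ctr s v) (rad s v) ∩ closedBall (ctr s w) (rad s w)).Nonempty := by
  rw [G, fromRel_adj] at h
  rcases h.2 with h2 | h2
  · exact touchR hs h2
  · rw [Set.inter_comm]; exact touchR hs h2

end
end KoebeLB
namespace KoebeLB
open Metric SimpleGraph
set_option maxHeartbeats 1000000
section
variable {s : ℕ}

lemma card_lower (S : Set (VV s))
    (hsub : ∀ p : Fin (s+1) × Fin s × Fin (4*s), (.inr (.inr p) : VV s) ∈ S) :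
    4*s^3 ≤ S.ncard := by
  classical
  set f : Fin (s+1) × Fin s × Fin (4*s) → VV s := fun p => .inr (.inr p) with hf
  have hinj : Function.Injective f := by
    intro p q h
    simpa [hf] using h
  have hr : Set.range f ⊆ S := by
    rintro x ⟨p, rfl⟩; exact hsub p
  have h1 : (Set.range f).ncard = (s+1)*(s*(4*s)) := by
    rw [← Nat.card_coe_set_eq, Nat.card_range_of_injective hinj]
    simp [Nat.card_eq_fintype_card]
  have h2 : (Set.range f).ncard ≤ S.ncard := Set.ncard_le_ncard hr (Set.toFinite S)
  have h3 : 4*s^3 ≤ (s+1)*(s*(4*s)) := by nlinarith [Nat.zero_le s]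
  omega

-- strict radius comparisons
lemma rad_lt_T (hs : 1 ≤ s) {j : ℕ} (hj : j < 2*s+1) (hjm : j ≤ 2*(m : Fin (s+1)))
    (t : Fin s) (a : Fin (4*s)) :
    rad s (vT s j hj) < rad s (.inr (.inr (m,t,a))) := by
  have hq := cast_q hs
  simp only [rad, vT]
  have h1 : (3:ℝ)^j ≤ 9^(m:ℕ) := by rw [e93]; exact mono3 hjm
  have h2 : 100*(s:ℝ)*3^j ≤ 100*(s:ℝ)*9^(m:ℕ) := by
    apply mul_le_mul_of_nonneg_left h1 (by linarith)
  nlinarith [one9 (m:ℕ), row_lb1 t, @Nat.cast_nonneg ℝ _ _ _ (a:ℕ), pow_pos (show (0:ℝ)<9 by norm_num) (m:ℕ)]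

lemma rad_lt_S (hs : 1 ≤ s) (m : Fin (s+1)) {j : ℕ} (hj : j < 4*s) {t : Fin s}
    (hjt : j + 1 ≤ rowk s t) (a : Fin (4*s)) :
    rad s (vS s m j hj) < rad s (.inr (.inr (m,t,a))) := by
  have hq := cast_q hs
  simp only [rad, vS]
  have h1 : ((j:ℕ):ℝ) + 1 ≤ ((rowk s t : ℕ):ℝ) := by exact_mod_cast hjt
  have h9 : (0:ℝ) < 9^(m:ℕ) := pow_pos (by norm_num) _
  nlinarith [@Nat.cast_nonneg ℝ _ _ _ (a:ℕ)]

lemma rad_lt_W (hs : 1 ≤ s) (m : Fin (s+1)) (t : Fin s) {b : ℕ} (hb : b < 4*s)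
    {a : Fin (4*s)} (hba : b < (a:ℕ)) :
    rad s (vW s m t b hb) < rad s (.inr (.inr (m,t,a))) := by
  have hq := cast_q hs
  simp only [rad, vW]
  have h1 : ((b:ℕ):ℝ) + 1 ≤ ((a:ℕ):ℝ) := by exact_mod_cast hba
  have h9 : (0:ℝ) < 9^(m:ℕ) := pow_pos (by norm_num) _
  nlinarith

end
end KoebeLB
namespace KoebeLB
open Metric SimpleGraph
set_option maxHeartbeats 1000000
section
variable {s : ℕ}

lemma reach (hs : 1 ≤ s) {d : ℕ} (hd : 10*s ≤ d) (le : VV s → VV s → Prop)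
    (hlin : IsLinearOrder (VV s) le) (hK : ∀ a b : VV s, rad s b < rad s a → le a b)
    (p : Fin (s+1) × Fin s × Fin (4*s)) :
    (.inr (.inr p) : VV s) ∈ WReach (G s) le d (vT s 0 (by omega)) := by
  haveI := hlin
  obtain ⟨m, t, a⟩ := p
  have hm : 2*(m:ℕ) < 2*s+1 := by have := m.isLt; omega
  have hrow : 2*s+2*(t:ℕ)+1 < 4*s := by have := t.isLt; omega
  simp only [WReach, Set.mem_setOf_eq]
  refine ⟨hK _ _ (rad_lt_T hs (by omega) (by omega) t a),
    toothW s m t hm hrow (a:ℕ) a.isLt, toothW_isPath m t hm hrow (a:ℕ) a.isLt, ?_, ?_⟩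
  · have hlen := toothW_length m t hm hrow (a:ℕ) a.isLt
    refine le_of_eq_of_le hlen ?_
    have := m.isLt; have := t.isLt; have := a.isLt
    omega
  · intro x hx
    rcases toothW_support m t hm hrow (a:ℕ) a.isLt x hx with
      ⟨j, hj, hji, rfl⟩ | ⟨j, hj, hji, rfl⟩ | ⟨b, hb, hba, rfl⟩
    · exact hK _ _ (rad_lt_T hs hj hji t a)
    · have hj1 : j + 1 ≤ rowk s t := by unfold rowk; omega
      exact hK _ _ (rad_lt_S hs m hj hj1 a)
    · rcases Nat.lt_or_ge b (a:ℕ) with hlt | hge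
      · exact hK _ _ (rad_lt_W hs m t hb hlt)
      · have hba' : b = (a:ℕ) := by omega
        subst hba'
        exact refl_of le _

end
end KoebeLB

set_option maxHeartbeats 1000000 in
/-- There is a planar graph with a coin model all of whose Koebe orderings have weak
`d`-coloring number at least `c₀·d³`. -/
theorem koebe_wreach_lower_bound :
    ∃ c₀ : ℝ, 0 < c₀ ∧
      ∀ d : ℕ,
        ∃ (V : Type) (_ : Fintype V) (G : SimpleGraph V)
          (c : V → EuclideanSpace ℝ (Fin 2)) (r : V → ℝ),
          IsCoinModel G c r ∧
          ∀ le : V → V → Prop, IsLinearOrder V le →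
            (∀ a b : V, r b < r a → le a b) →
            ∃ u : V, c₀ * (d : ℝ) ^ 3 ≤ ((WReach G le d u).ncard : ℝ) := by
  classical
  refine ⟨((2:ℝ)^40)⁻¹, by norm_num, fun d => ?_⟩
  by_cases hsmall : d < 2^13
  · -- trivial single-vertex graph
    refine ⟨PUnit, inferInstance, ⊥, fun _ => KoebeLB.pt 0 0, fun _ => 1, ?_, ?_⟩
    · refine ⟨fun _ => one_pos, fun u v h => absurd (Subsingleton.elim u v) h, fun u v h => ?_⟩
      simp at h
    · intro le hlin hK
      haveI := hlin
      refine ⟨PUnit.unit, ?_⟩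
      have hmem : PUnit.unit ∈ WReach (⊥ : SimpleGraph PUnit) le d PUnit.unit := by
        simp only [WReach, Set.mem_setOf_eq]
        refine ⟨refl_of le _, SimpleGraph.Walk.nil, SimpleGraph.Walk.IsPath.nil, by simp, ?_⟩
        intro x hx
        exact refl_of le _
      have h1 : 1 ≤ (WReach (⊥ : SimpleGraph PUnit) le d PUnit.unit).ncard := by
        have := (Set.ncard_pos (Set.toFinite _)).mpr ⟨PUnit.unit, hmem⟩
        omega
      have h2 : (1:ℝ) ≤ ((WReach (⊥ : SimpleGraph PUnit) le d PUnit.unit).ncard : ℝ) := by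
        exact_mod_cast h1
      have hd3 : (d:ℝ) ≤ 2^13 := by
        have : d ≤ 2^13 := le_of_lt hsmall
        exact_mod_cast this
      have hd0 : (0:ℝ) ≤ (d:ℝ) := Nat.cast_nonneg d
      have h3 : (d:ℝ)^3 ≤ (2^13:ℝ)^3 := pow_le_pow_left₀ hd0 hd3 3
      have h4 : ((2:ℝ)^40)⁻¹ * (d:ℝ)^3 ≤ 1 := by
        rw [inv_mul_le_iff₀ (by norm_num : (0:ℝ) < 2^40)]
        nlinarith [h3]
      linarith
  · -- main construction
    push_neg at hsmall
    set s := d / 16 with hsdef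
    have hs : 1 ≤ s := by omega
    have hd10 : 10*s ≤ d := by omega
    refine ⟨KoebeLB.VV s, inferInstance, KoebeLB.G s, KoebeLB.ctr s, KoebeLB.rad s, ?_, ?_⟩
    · refine ⟨KoebeLB.rad_pos hs, fun u v h => ?_, fun u v h => KoebeLB.touchAdj hs h⟩
      exact ball_disjoint_ball (KoebeLB.sep hs u v h)
    · intro le hlin hK
      refine ⟨KoebeLB.vT s 0 (by omega), ?_⟩
      have hsub := KoebeLB.reach hs hd10 le hlin hK
      have hcard := KoebeLB.card_lower (WReach (KoebeLB.G s) le d (KoebeLB.vT s 0 (by omega))) hsub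
      have hcardR : (4*s^3 : ℝ) ≤ ((WReach (KoebeLB.G s) le d (KoebeLB.vT s 0 (by omega))).ncard : ℝ) := by
        exact_mod_cast hcard
      have hds : d ≤ 32*s := by omega
      have hdsR : (d:ℝ) ≤ 32*(s:ℝ) := by exact_mod_cast hds
      have hcube : (d:ℝ)^3 ≤ (32*(s:ℝ))^3 := by
        apply pow_le_pow_left₀ (Nat.cast_nonneg d) hdsR
      have hsR : (0:ℝ) ≤ (s:ℝ) := Nat.cast_nonneg s
      have e2 : ((2:ℝ)^40)⁻¹ * (32*(s:ℝ))^3 ≤ 4*(s:ℝ)^3 := by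
        have e3 : ((2:ℝ)^40)⁻¹ * (32*(s:ℝ))^3 = (32768 * ((2:ℝ)^40)⁻¹) * (s:ℝ)^3 := by ring
        rw [e3]
        have h32 : (32768 * ((2:ℝ)^40)⁻¹) ≤ 4 := by norm_num
        nlinarith [pow_nonneg hsR 3]
      calc ((2:ℝ)^40)⁻¹*(d:ℝ)^3 ≤ ((2:ℝ)^40)⁻¹*(32*(s:ℝ))^3 :=
            mul_le_mul_of_nonneg_left hcube (by positivity)
      _ ≤ 4*(s:ℝ)^3 := e2
      _ ≤ _ := by linarith [hcardR]
end
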